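/- arXiv:2511.02143 — 4 statements merged into one kernel-verified Lean document; each statement's English description precedes it below -/
import Mathlib

section
/- Let k ≥ 1 and let u be a C³ real-valued function on an open neighborhood of (0, s₀) in ℝ × ℝᵏ such that u(0, s) = 0 for all s near s₀, ∂ₜu(0, s₀) = 0, and ∂ₜ²u(0, s₀) ≠ 0. Then there exist a neighborhood V of s₀ and a unique C¹ function T : V → ℝ with T(s₀) = 0 such that, writing u(t, s) = t·v(t, s) with v(t, s) = ∫₀¹ ∂ₜu(σt, s) dσ, one has v(T(s), s) = 0 for all s ∈ V (so u(T(s), s) = 0, and T(s) is the unique root of v(·, s) near 0, i.e. the unique possible nonzero root of u(·, s) near 0); moreover the gradient satisfies ∇ₛT(s₀) = −2·∇ₛ∂ₜu(0, s₀) / ∂ₜ²u(0, s₀). -/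
open Filter Topology Metric Set MeasureTheory intervalIntegral

noncomputable section

noncomputable section

/-- time-derivative of `u`, as a function of `(t,s)`. -/
private def gg (k : ℕ) (u : ℝ → (Fin k → ℝ) → ℝ) : ℝ × (Fin k → ℝ) → ℝ :=
  fun q => deriv (fun τ => u τ q.2) q.1

/-- Hadamard quotient `v(t,s) = ∫₀¹ ∂ₜu(σt,s) dσ`. -/
private def vv (k : ℕ) (u : ℝ → (Fin k → ℝ) → ℝ) : ℝ × (Fin k → ℝ) → ℝ :=
  fun p => ∫ σ in (0:ℝ)..1, gg k u (σ * p.1, p.2)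

/-- the linear map `(t,s) ↦ (σt, s)`. -/
private def LL (k : ℕ) (σ : ℝ) : (ℝ × (Fin k → ℝ)) →L[ℝ] (ℝ × (Fin k → ℝ)) :=
  σ • ((ContinuousLinearMap.fst ℝ ℝ (Fin k → ℝ)).prod 0) +
    ((0 : (ℝ × (Fin k → ℝ)) →L[ℝ] ℝ).prod (ContinuousLinearMap.snd ℝ ℝ (Fin k → ℝ)))

/-- candidate derivative of `vv`. -/
private def DD (k : ℕ) (u : ℝ → (Fin k → ℝ) → ℝ) :
    ℝ × (Fin k → ℝ) → (ℝ × (Fin k → ℝ)) →L[ℝ] ℝ :=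
  fun p => ∫ σ in (0:ℝ)..1, (fderiv ℝ (gg k u) (σ * p.1, p.2)).comp (LL k σ)

private lemma LL_apply (k : ℕ) (σ : ℝ) (p : ℝ × (Fin k → ℝ)) :
    LL k σ p = (σ * p.1, p.2) := by
  simp [LL, Prod.ext_iff, smul_eq_mul]

private lemma LL_norm (k : ℕ) {σ : ℝ} (hσ : |σ| ≤ 1) : ‖LL k σ‖ ≤ 1 := by
  refine ContinuousLinearMap.opNorm_le_bound _ zero_le_one fun p => ?_
  rw [LL_apply, one_mul, Prod.norm_def, Prod.norm_def]
  refine max_le_max ?_ le_rfl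
  simp only [Real.norm_eq_abs, abs_mul]
  exact mul_le_of_le_one_left (abs_nonneg _) hσ

private lemma LL_cont (k : ℕ) : Continuous (LL k) := by
  exact (continuous_id.smul continuous_const).add continuous_const
variable {k : ℕ} {u : ℝ → (Fin k → ℝ) → ℝ} {W : Set (ℝ × (Fin k → ℝ))}


private lemma hder (hWopen : IsOpen W) (hu : ContDiffOn ℝ 3 (fun p => u p.1 p.2) W) :
    ∀ q ∈ W, HasDerivAt (fun τ => u τ q.2)
      (fderiv ℝ (fun p : ℝ × (Fin k → ℝ) => u p.1 p.2) q (1, 0)) q.1 := by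
  intro q hq
  have hFd : DifferentiableAt ℝ (fun p : ℝ × (Fin k → ℝ) => u p.1 p.2) q :=
    (hu.differentiableOn (by norm_num)).differentiableAt (hWopen.mem_nhds hq)
  have h1 : HasDerivAt (fun τ : ℝ => ((τ, q.2) : ℝ × (Fin k → ℝ))) (1, 0) q.1 :=
    (hasDerivAt_id q.1).prodMk (hasDerivAt_const q.1 q.2)
  have := hFd.hasFDerivAt.comp_hasDerivAt q.1 h1
  simpa [Function.comp_def] using this

private lemma gg_eq (hWopen : IsOpen W) (hu : ContDiffOn ℝ 3 (fun p => u p.1 p.2) W) :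
    ∀ q ∈ W, gg k u q = fderiv ℝ (fun p : ℝ × (Fin k → ℝ) => u p.1 p.2) q (1, 0) :=
  fun q hq => (hder hWopen hu q hq).deriv

private lemma hderg (hWopen : IsOpen W) (hu : ContDiffOn ℝ 3 (fun p => u p.1 p.2) W) :
    ∀ q ∈ W, HasDerivAt (fun τ => u τ q.2) (gg k u q) q.1 :=
  fun q hq => (gg_eq hWopen hu q hq) ▸ hder hWopen hu q hq

private lemma gg_C2 (hWopen : IsOpen W) (hu : ContDiffOn ℝ 3 (fun p => u p.1 p.2) W) :
    ContDiffOn ℝ 2 (gg k u) W := by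
  have h1 : ContDiffOn ℝ 2 (fderiv ℝ (fun p : ℝ × (Fin k → ℝ) => u p.1 p.2)) W :=
    hu.fderiv_of_isOpen hWopen (by norm_num)
  exact (h1.clm_apply contDiffOn_const).congr (gg_eq hWopen hu)

end
variable {k : ℕ} {s₀ : Fin k → ℝ} {ε : ℝ}

private lemma scaleK (hε : 0 < ε) {σ : ℝ} (hσ : |σ| ≤ 1) {p : ℝ × (Fin k → ℝ)}
    (hp : p ∈ closedBall ((0:ℝ), s₀) ε) :
    ((σ * p.1, p.2) : ℝ × (Fin k → ℝ)) ∈ closedBall ((0:ℝ), s₀) ε := by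
  rw [mem_closedBall] at hp ⊢
  calc dist ((σ * p.1, p.2) : ℝ × (Fin k → ℝ)) ((0:ℝ), s₀)
      = max (dist (σ * p.1) 0) (dist p.2 s₀) := Prod.dist_eq
    _ ≤ max (dist p.1 0) (dist p.2 s₀) := by
        refine max_le_max ?_ le_rfl
        rw [Real.dist_eq, Real.dist_eq, sub_zero, sub_zero, abs_mul]
        exact mul_le_of_le_one_left (abs_nonneg _) hσ
    _ = dist p ((0:ℝ), s₀) := (Prod.dist_eq (x := p) (y := ((0:ℝ), s₀))).symm
    _ ≤ ε := hp

private lemma scaleU (hε : 0 < ε) {σ : ℝ} (hσ : |σ| ≤ 1) {p : ℝ × (Fin k → ℝ)}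
    (hp : p ∈ ball ((0:ℝ), s₀) ε) :
    ((σ * p.1, p.2) : ℝ × (Fin k → ℝ)) ∈ ball ((0:ℝ), s₀) ε := by
  rw [mem_ball] at hp ⊢
  calc dist ((σ * p.1, p.2) : ℝ × (Fin k → ℝ)) ((0:ℝ), s₀)
      = max (dist (σ * p.1) 0) (dist p.2 s₀) := Prod.dist_eq
    _ ≤ max (dist p.1 0) (dist p.2 s₀) := by
        refine max_le_max ?_ le_rfl
        rw [Real.dist_eq, Real.dist_eq, sub_zero, sub_zero, abs_mul]
        exact mul_le_of_le_one_left (abs_nonneg _) hσ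
    _ = dist p ((0:ℝ), s₀) := (Prod.dist_eq (x := p) (y := ((0:ℝ), s₀))).symm
    _ < ε := hp

private lemma abs_le_one_of_mem_uIcc {σ : ℝ} (hσ : σ ∈ uIcc (0:ℝ) 1) : |σ| ≤ 1 := by
  rw [uIcc_of_le zero_le_one] at hσ
  exact abs_le.2 ⟨by linarith [hσ.1], hσ.2⟩

private lemma abs_le_one_of_mem_uIoc {σ : ℝ} (hσ : σ ∈ uIoc (0:ℝ) 1) : |σ| ≤ 1 := by
  rw [uIoc_of_le zero_le_one] at hσ
  exact abs_le.2 ⟨by linarith [hσ.1], hσ.2⟩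
noncomputable section
variable {k : ℕ} {u : ℝ → (Fin k → ℝ) → ℝ} {W : Set (ℝ × (Fin k → ℝ))} {s₀ : Fin k → ℝ} {ε : ℝ}

private lemma path_contOn (hWopen : IsOpen W) (hu : ContDiffOn ℝ 3 (fun p => u p.1 p.2) W)
    (hε : 0 < ε) (hKW : closedBall ((0:ℝ), s₀) ε ⊆ W)
    {p : ℝ × (Fin k → ℝ)} (hp : p ∈ closedBall ((0:ℝ), s₀) ε) :
    ContinuousOn (fun σ : ℝ => gg k u (σ * p.1, p.2)) (uIcc (0:ℝ) 1) := by
  have := ((gg_C2 hWopen hu).continuousOn).comp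
    ((Continuous.continuousOn (by fun_prop) : ContinuousOn (fun σ : ℝ =>
        ((σ * p.1, p.2) : ℝ × (Fin k → ℝ))) (uIcc (0:ℝ) 1)))
    (fun σ hσ => hKW (scaleK hε (abs_le_one_of_mem_uIcc hσ) hp))
  simpa [Function.comp_def] using this

private lemma fderiv_gg_contOn (hWopen : IsOpen W)
    (hu : ContDiffOn ℝ 3 (fun p => u p.1 p.2) W) :
    ContinuousOn (fderiv ℝ (gg k u)) W :=
  ((gg_C2 hWopen hu).fderiv_of_isOpen hWopen (le_of_eq (by norm_num) : (1:WithTop ℕ∞) + 1 ≤ 2)).continuousOn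

private lemma DDint_contOn (hWopen : IsOpen W) (hu : ContDiffOn ℝ 3 (fun p => u p.1 p.2) W)
    (hε : 0 < ε) (hKW : closedBall ((0:ℝ), s₀) ε ⊆ W)
    {p : ℝ × (Fin k → ℝ)} (hp : p ∈ closedBall ((0:ℝ), s₀) ε) :
    ContinuousOn (fun σ : ℝ => ((fderiv ℝ (gg k u) (σ * p.1, p.2)).comp (LL k σ)))
      (uIcc (0:ℝ) 1) := by
  refine ContinuousOn.clm_comp ?_ (LL_cont k).continuousOn
  have := (fderiv_gg_contOn hWopen hu).comp
    ((Continuous.continuousOn (by fun_prop) : ContinuousOn (fun σ : ℝ =>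
        ((σ * p.1, p.2) : ℝ × (Fin k → ℝ))) (uIcc (0:ℝ) 1)))
    (fun σ hσ => hKW (scaleK hε (abs_le_one_of_mem_uIcc hσ) hp))
  simpa [Function.comp_def] using this

private lemma exists_M (hWopen : IsOpen W) (hu : ContDiffOn ℝ 3 (fun p => u p.1 p.2) W)
    (hε : 0 < ε) (hKW : closedBall ((0:ℝ), s₀) ε ⊆ W) :
    ∃ M : ℝ, 0 ≤ M ∧ ∀ q ∈ closedBall ((0:ℝ), s₀) ε, ‖fderiv ℝ (gg k u) q‖ ≤ M := by
  obtain ⟨M, hM⟩ := (isCompact_closedBall ((0:ℝ), s₀) ε).exists_bound_of_continuousOn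
    ((fderiv_gg_contOn hWopen hu).mono hKW)
  exact ⟨M, le_trans (norm_nonneg _) (hM _ (mem_closedBall_self hε.le)), hM⟩
noncomputable section
variable {k : ℕ} {u : ℝ → (Fin k → ℝ) → ℝ} {W : Set (ℝ × (Fin k → ℝ))} {s₀ : Fin k → ℝ} {ε : ℝ}

private lemma vv_hasFDerivAt (hWopen : IsOpen W) (hu : ContDiffOn ℝ 3 (fun p => u p.1 p.2) W)
    (hε : 0 < ε) (hKW : closedBall ((0:ℝ), s₀) ε ⊆ W)
    {p₀ : ℝ × (Fin k → ℝ)} (hp₀ : p₀ ∈ ball ((0:ℝ), s₀) ε) :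
    HasFDerivAt (vv k u) (DD k u p₀) p₀ := by
  obtain ⟨M, hM0, hM⟩ := exists_M hWopen hu hε hKW
  have hρ : 0 < ε - dist p₀ ((0:ℝ), s₀) := by rw [mem_ball] at hp₀; linarith
  have hballU : ball p₀ (ε - dist p₀ ((0:ℝ), s₀)) ⊆ ball ((0:ℝ), s₀) ε := by
    intro p hp
    rw [mem_ball] at hp ⊢
    calc dist p ((0:ℝ), s₀) ≤ dist p p₀ + dist p₀ ((0:ℝ), s₀) := dist_triangle _ _ _
      _ < ε := by linarith
  have hUK : ball ((0:ℝ), s₀) ε ⊆ closedBall ((0:ℝ), s₀) ε := ball_subset_closedBall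
  refine intervalIntegral.hasFDerivAt_integral_of_dominated_of_fderiv_le
    (F := fun p σ => gg k u (σ * p.1, p.2))
    (F' := fun p σ => (fderiv ℝ (gg k u) (σ * p.1, p.2)).comp (LL k σ))
    (bound := fun _ => M) (ball_mem_nhds p₀ hρ) ?_ ?_ ?_ ?_ ?_ ?_
  · filter_upwards [isOpen_ball.mem_nhds hp₀] with p hp
    exact ((path_contOn hWopen hu hε hKW (hUK hp)).mono uIoc_subset_uIcc).aestronglyMeasurable
      measurableSet_uIoc
  · exact (path_contOn hWopen hu hε hKW (hUK hp₀)).intervalIntegrable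
  · exact ((DDint_contOn hWopen hu hε hKW (hUK hp₀)).mono uIoc_subset_uIcc).aestronglyMeasurable
      measurableSet_uIoc
  · refine Eventually.of_forall fun σ hσ p hp => ?_
    have hσ1 : |σ| ≤ 1 := abs_le_one_of_mem_uIoc hσ
    have hpK : ((σ * p.1, p.2) : ℝ × (Fin k → ℝ)) ∈ closedBall ((0:ℝ), s₀) ε :=
      scaleK hε hσ1 (hUK (hballU hp))
    calc ‖(fderiv ℝ (gg k u) (σ * p.1, p.2)).comp (LL k σ)‖
        ≤ ‖fderiv ℝ (gg k u) (σ * p.1, p.2)‖ * ‖LL k σ‖ :=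
          ContinuousLinearMap.opNorm_comp_le _ _
      _ ≤ M * 1 := mul_le_mul (hM _ hpK) (LL_norm k hσ1) (norm_nonneg _) hM0
      _ = M := mul_one M
  · exact intervalIntegrable_const
  · refine Eventually.of_forall fun σ hσ p hp => ?_
    have hσ1 : |σ| ≤ 1 := abs_le_one_of_mem_uIoc hσ
    have hmemW : ((σ * p.1, p.2) : ℝ × (Fin k → ℝ)) ∈ W :=
      hKW (scaleK hε hσ1 (hUK (hballU hp)))
    have hdg : HasFDerivAt (gg k u) (fderiv ℝ (gg k u) (σ * p.1, p.2)) (σ * p.1, p.2) :=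
      (((gg_C2 hWopen hu).differentiableOn (by norm_num)).differentiableAt
        (hWopen.mem_nhds hmemW)).hasFDerivAt
    have heq : (fun p : ℝ × (Fin k → ℝ) => ((σ * p.1, p.2) : ℝ × (Fin k → ℝ))) = LL k σ :=
      funext fun q => (LL_apply k σ q).symm
    have hL : HasFDerivAt (fun p : ℝ × (Fin k → ℝ) => ((σ * p.1, p.2) : ℝ × (Fin k → ℝ)))
        (LL k σ) p := heq ▸ (LL k σ).hasFDerivAt
    have := hdg.comp p hL
    simpa [Function.comp_def] using this

private lemma DD_contAt (hWopen : IsOpen W) (hu : ContDiffOn ℝ 3 (fun p => u p.1 p.2) W)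
    (hε : 0 < ε) (hKW : closedBall ((0:ℝ), s₀) ε ⊆ W)
    {p₀ : ℝ × (Fin k → ℝ)} (hp₀ : p₀ ∈ ball ((0:ℝ), s₀) ε) :
    ContinuousAt (DD k u) p₀ := by
  obtain ⟨M, hM0, hM⟩ := exists_M hWopen hu hε hKW
  have hUK : ball ((0:ℝ), s₀) ε ⊆ closedBall ((0:ℝ), s₀) ε := ball_subset_closedBall
  refine intervalIntegral.continuousAt_of_dominated_interval ?_ ?_
    (_root_.intervalIntegrable_const (c := M)) ?_
  · filter_upwards [isOpen_ball.mem_nhds hp₀] with p hp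
    exact ((DDint_contOn hWopen hu hε hKW (hUK hp)).mono uIoc_subset_uIcc).aestronglyMeasurable
      measurableSet_uIoc
  · filter_upwards [isOpen_ball.mem_nhds hp₀] with p hp
    refine Eventually.of_forall fun σ hσ => ?_
    have hσ1 : |σ| ≤ 1 := abs_le_one_of_mem_uIoc hσ
    have hpK : ((σ * p.1, p.2) : ℝ × (Fin k → ℝ)) ∈ closedBall ((0:ℝ), s₀) ε :=
      scaleK hε hσ1 (hUK hp)
    calc ‖(fderiv ℝ (gg k u) (σ * p.1, p.2)).comp (LL k σ)‖
        ≤ ‖fderiv ℝ (gg k u) (σ * p.1, p.2)‖ * ‖LL k σ‖ :=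
          ContinuousLinearMap.opNorm_comp_le _ _
      _ ≤ M * 1 := mul_le_mul (hM _ hpK) (LL_norm k hσ1) (norm_nonneg _) hM0
      _ = M := mul_one M
  · refine Eventually.of_forall fun σ hσ => ?_
    have hσ1 : |σ| ≤ 1 := abs_le_one_of_mem_uIoc hσ
    have hcont : ContinuousOn (fun p : ℝ × (Fin k → ℝ) =>
        (fderiv ℝ (gg k u) (σ * p.1, p.2)).comp (LL k σ)) (ball ((0:ℝ), s₀) ε) := by
      refine ContinuousOn.clm_comp ?_ continuousOn_const
      have := (fderiv_gg_contOn hWopen hu).comp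
        ((Continuous.continuousOn (by fun_prop) : ContinuousOn (fun p : ℝ × (Fin k → ℝ) =>
            ((σ * p.1, p.2) : ℝ × (Fin k → ℝ))) (ball ((0:ℝ), s₀) ε)))
        (fun p hp => hKW (scaleK hε hσ1 (hUK hp)))
      simpa [Function.comp_def] using this
    exact hcont.continuousAt (isOpen_ball.mem_nhds hp₀)
noncomputable section
variable {k : ℕ} {u : ℝ → (Fin k → ℝ) → ℝ} {W : Set (ℝ × (Fin k → ℝ))} {s₀ : Fin k → ℝ} {ε : ℝ}

private lemma vv_contDiffOn (hWopen : IsOpen W) (hu : ContDiffOn ℝ 3 (fun p => u p.1 p.2) W)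
    (hε : 0 < ε) (hKW : closedBall ((0:ℝ), s₀) ε ⊆ W) :
    ContDiffOn ℝ 1 (vv k u) (ball ((0:ℝ), s₀) ε) := by
  rw [show (1 : WithTop ℕ∞) = 0 + 1 by norm_num,
    contDiffOn_succ_iff_fderiv_of_isOpen isOpen_ball]
  refine ⟨fun p hp =>
    (vv_hasFDerivAt hWopen hu hε hKW hp).differentiableAt.differentiableWithinAt, ?_, ?_⟩
  · intro h; simp at h
  · rw [contDiffOn_zero]
    refine ContinuousOn.congr
      (fun p hp => (DD_contAt hWopen hu hε hKW hp).continuousWithinAt)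
      (fun p hp => (vv_hasFDerivAt hWopen hu hε hKW hp).fderiv)

private lemma clm_decomp (D : (ℝ × (Fin k → ℝ)) →L[ℝ] ℝ) (t : ℝ) (s : Fin k → ℝ) :
    D (t, s) = t * D (1, 0) + D (0, s) := by
  have h : ((t, s) : ℝ × (Fin k → ℝ)) = t • ((1:ℝ), (0 : Fin k → ℝ)) + ((0:ℝ), s) := by
    simp [Prod.ext_iff]
  rw [h, map_add, _root_.map_smul, smul_eq_mul]

private lemma DD0_apply (hWopen : IsOpen W) (hu : ContDiffOn ℝ 3 (fun p => u p.1 p.2) W)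
    (hε : 0 < ε) (hKW : closedBall ((0:ℝ), s₀) ε ⊆ W) (w : ℝ × (Fin k → ℝ)) :
    DD k u ((0:ℝ), s₀) w
      = ∫ σ in (0:ℝ)..1, fderiv ℝ (gg k u) ((0:ℝ), s₀) (σ * w.1, w.2) := by
  have hint : IntervalIntegrable
      (fun σ : ℝ => (fderiv ℝ (gg k u) (σ * (0:ℝ), s₀)).comp (LL k σ)) volume 0 1 :=
    (DDint_contOn hWopen hu hε hKW (mem_closedBall_self hε.le)).intervalIntegrable
  have h0 : DD k u ((0:ℝ), s₀)
      = ∫ σ in (0:ℝ)..1, (fderiv ℝ (gg k u) (σ * (0:ℝ), s₀)).comp (LL k σ) := rfl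
  rw [h0]
  rw [intervalIntegral.integral_of_le zero_le_one,
    intervalIntegral.integral_of_le zero_le_one]
  rw [ContinuousLinearMap.integral_apply]
  · refine setIntegral_congr_fun measurableSet_Ioc fun σ _ => ?_
    rw [ContinuousLinearMap.comp_apply, LL_apply, mul_zero]
  · rw [intervalIntegrable_iff, uIoc_of_le zero_le_one] at hint
    exact hint

private lemma DD0_fst (hWopen : IsOpen W) (hu : ContDiffOn ℝ 3 (fun p => u p.1 p.2) W)
    (hε : 0 < ε) (hKW : closedBall ((0:ℝ), s₀) ε ⊆ W) :
    DD k u ((0:ℝ), s₀) ((1:ℝ), (0 : Fin k → ℝ))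
      = fderiv ℝ (gg k u) ((0:ℝ), s₀) (1, 0) / 2 := by
  rw [DD0_apply hWopen hu hε hKW]
  have h : ∀ σ : ℝ, fderiv ℝ (gg k u) ((0:ℝ), s₀)
      ((σ * ((1:ℝ), (0 : Fin k → ℝ)).1, ((1:ℝ), (0 : Fin k → ℝ)).2))
      = σ * fderiv ℝ (gg k u) ((0:ℝ), s₀) (1, 0) := by
    intro σ
    have h2 : ((σ * ((1:ℝ), (0 : Fin k → ℝ)).1, ((1:ℝ), (0 : Fin k → ℝ)).2) : ℝ × (Fin k → ℝ))
        = σ • ((1:ℝ), (0 : Fin k → ℝ)) := by simp [Prod.ext_iff]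
    rw [h2, _root_.map_smul, smul_eq_mul]
  simp_rw [h]
  rw [intervalIntegral.integral_mul_const, integral_id]
  ring

private lemma d_eq (hWopen : IsOpen W) (hu : ContDiffOn ℝ 3 (fun p => u p.1 p.2) W)
    (hW0 : ((0:ℝ), s₀) ∈ W) :
    fderiv ℝ (gg k u) ((0:ℝ), s₀) ((1:ℝ), (0 : Fin k → ℝ))
      = iteratedDeriv 2 (fun t => u t s₀) 0 := by
  have hgd : DifferentiableAt ℝ (gg k u) ((0:ℝ), s₀) :=
    (((gg_C2 hWopen hu).differentiableOn (by norm_num)).differentiableAt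
      (hWopen.mem_nhds hW0))
  have h2 : HasDerivAt (fun τ : ℝ => ((τ, s₀) : ℝ × (Fin k → ℝ))) (1, 0) 0 :=
    (hasDerivAt_id (0:ℝ)).prodMk (hasDerivAt_const (0:ℝ) s₀)
  have h1 : HasDerivAt (fun t => gg k u (t, s₀))
      (fderiv ℝ (gg k u) ((0:ℝ), s₀) (1, 0)) 0 := by
    simpa [Function.comp_def] using hgd.hasFDerivAt.comp_hasDerivAt 0 h2
  have h3 : (fun t => gg k u (t, s₀)) = deriv (fun τ => u τ s₀) := rfl
  rw [h3] at h1
  rw [iteratedDeriv_succ, iteratedDeriv_one]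
  exact h1.deriv.symm

private lemma vv_zero (s : Fin k → ℝ) : vv k u ((0:ℝ), s) = gg k u ((0:ℝ), s) := by
  show (∫ σ in (0:ℝ)..1, gg k u (σ * ((0:ℝ), s).1, ((0:ℝ), s).2)) = _
  simp

private lemma u_eq_mul_vv (hWopen : IsOpen W) (hu : ContDiffOn ℝ 3 (fun p => u p.1 p.2) W)
    (hε : 0 < ε) (hKW : closedBall ((0:ℝ), s₀) ε ⊆ W) {t : ℝ} {s : Fin k → ℝ}
    (hts : ((t, s) : ℝ × (Fin k → ℝ)) ∈ ball ((0:ℝ), s₀) ε) (h0 : u 0 s = 0) :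
    u t s = t * vv k u (t, s) := by
  by_cases ht : t = 0
  · subst ht; simpa using h0
  · have hlin : ∀ τ ∈ uIcc (0:ℝ) t, ((τ, s) : ℝ × (Fin k → ℝ)) ∈ ball ((0:ℝ), s₀) ε := by
      intro τ hτ
      have habs : |τ| ≤ |t| := by
        rcases le_total (0:ℝ) t with h | h
        · rw [uIcc_of_le h] at hτ
          rw [abs_of_nonneg hτ.1, abs_of_nonneg h]; exact hτ.2
        · rw [uIcc_of_ge h] at hτ
          rw [abs_of_nonpos hτ.2, abs_of_nonpos h]; linarith [hτ.1]
      rw [mem_ball] at hts ⊢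
      calc dist ((τ, s) : ℝ × (Fin k → ℝ)) ((0:ℝ), s₀)
          = max (dist τ 0) (dist s s₀) := Prod.dist_eq
        _ ≤ max (dist t 0) (dist s s₀) := by
            refine max_le_max ?_ le_rfl
            rw [Real.dist_eq, Real.dist_eq, sub_zero, sub_zero]; exact habs
        _ = dist ((t, s) : ℝ × (Fin k → ℝ)) ((0:ℝ), s₀) :=
            (Prod.dist_eq (x := ((t, s) : ℝ × (Fin k → ℝ))) (y := ((0:ℝ), s₀))).symm
        _ < ε := hts
    have hderiv : ∀ τ ∈ uIcc (0:ℝ) t, HasDerivAt (fun τ' => u τ' s) (gg k u (τ, s)) τ :=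
      fun τ hτ => hderg hWopen hu (τ, s) (hKW (ball_subset_closedBall (hlin τ hτ)))
    have hint : IntervalIntegrable (fun τ => gg k u (τ, s)) volume 0 t := by
      refine ContinuousOn.intervalIntegrable ?_
      have := ((gg_C2 hWopen hu).continuousOn).comp
        ((Continuous.continuousOn (by fun_prop) : ContinuousOn (fun τ : ℝ =>
            ((τ, s) : ℝ × (Fin k → ℝ))) (uIcc (0:ℝ) t)))
        (fun τ hτ => hKW (ball_subset_closedBall (hlin τ hτ)))
      simpa [Function.comp_def] using this
    have hFTC : ∫ τ in (0:ℝ)..t, gg k u (τ, s) = u t s - u 0 s :=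
      intervalIntegral.integral_eq_sub_of_hasDerivAt hderiv hint
    have hsub : vv k u (t, s) = t⁻¹ • ∫ τ in (0:ℝ)..t, gg k u (τ, s) := by
      show (∫ σ in (0:ℝ)..1, gg k u (σ * ((t, s) : ℝ × (Fin k → ℝ)).1,
        ((t, s) : ℝ × (Fin k → ℝ)).2)) = _
      have := intervalIntegral.integral_comp_mul_right (a := (0:ℝ)) (b := 1)
        (fun τ => gg k u (τ, s)) ht
      simpa using this
    rw [hsub, hFTC, h0, sub_zero, smul_eq_mul]
    field_simp
/-- existence, uniqueness and first-order expansion of the nontrivial return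
time at a fold point. If `u` is `C³` near `(0,s₀) ∈ ℝ × ℝᵏ` with `u(0,s) = 0` for `s` near
`s₀`, `∂ₜu(0,s₀) = 0` and `∂ₜ²u(0,s₀) ≠ 0`, then, writing `u(t,s) = t·v(t,s)` with
`v(t,s) = ∫₀¹ ∂ₜu(σt,s) dσ`, there are a neighborhood `V` of `s₀` and a unique `C¹` function
`T : V → ℝ` with `T(s₀) = 0` and `v(T(s),s) = 0` on `V` (so `u(T(s),s) = 0` and `T(s)` is the
unique root of `v(·,s)` near `0`), and
`∇ₛT(s₀) = −2·∇ₛ∂ₜu(0,s₀)/∂ₜ²u(0,s₀)`. -/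
theorem stmt0 (k : ℕ) (hk : 1 ≤ k) (u : ℝ → (Fin k → ℝ) → ℝ) (s₀ : Fin k → ℝ)
    (W : Set (ℝ × (Fin k → ℝ))) (hWopen : IsOpen W) (hW0 : ((0 : ℝ), s₀) ∈ W)
    (hu : ContDiffOn ℝ 3 (fun p => u p.1 p.2) W)
    (hu0 : ∀ᶠ s in 𝓝 s₀, u 0 s = 0)
    (hut : deriv (fun t => u t s₀) 0 = 0)
    (hutt : iteratedDeriv 2 (fun t => u t s₀) 0 ≠ 0) :
    ∃ V ∈ 𝓝 s₀, ∃ T : (Fin k → ℝ) → ℝ, ∃ δ > (0:ℝ),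
      ContDiffOn ℝ 1 T V ∧
      T s₀ = 0 ∧
      (∀ s ∈ V, (∫ σ in (0:ℝ)..1, deriv (fun τ => u τ s) (σ * T s)) = 0) ∧
      (∀ s ∈ V, u (T s) s = 0) ∧
      (∀ s ∈ V, |T s| < δ ∧ ∀ t : ℝ, |t| < δ →
        (∫ σ in (0:ℝ)..1, deriv (fun τ => u τ s) (σ * t)) = 0 → t = T s) ∧
      (∀ T' : (Fin k → ℝ) → ℝ,
        (∀ s ∈ V, |T' s| < δ ∧ (∫ σ in (0:ℝ)..1, deriv (fun τ => u τ s) (σ * T' s)) = 0) →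
        Set.EqOn T' T V) ∧
      fderiv ℝ T s₀ = (-2 / iteratedDeriv 2 (fun t => u t s₀) 0) •
        fderiv ℝ (fun s => deriv (fun t => u t s) 0) s₀ := by
  obtain ⟨ε₀, hε₀, hball⟩ := Metric.isOpen_iff.1 hWopen _ hW0
  set ε := ε₀ / 2 with hεdef
  have hεpos : 0 < ε := by positivity
  have hKW : closedBall ((0:ℝ), s₀) ε ⊆ W := fun p hp =>
    hball (lt_of_le_of_lt (mem_closedBall.1 hp) (by rw [hεdef]; linarith))
  have hp₀U : ((0:ℝ), s₀) ∈ ball ((0:ℝ), s₀) ε := mem_ball_self hεpos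
  have hDv₀ := vv_hasFDerivAt hWopen hu hεpos hKW hp₀U
  set D₀ := DD k u ((0:ℝ), s₀) with hD₀def
  set d := iteratedDeriv 2 (fun t => u t s₀) 0 with hddef
  set c := D₀ ((1:ℝ), (0 : Fin k → ℝ)) with hcdef
  have hc : c = d / 2 := by
    rw [hcdef, hD₀def, DD0_fst hWopen hu hεpos hKW, d_eq hWopen hu hW0]
  have hc0 : c ≠ 0 := by rw [hc]; exact div_ne_zero hutt two_ne_zero
  set Bc : (Fin k → ℝ) →L[ℝ] ℝ := D₀.comp (ContinuousLinearMap.inr ℝ ℝ (Fin k → ℝ)) with hBcdef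
  have hBc_apply : ∀ s : Fin k → ℝ, Bc s = D₀ (0, s) := fun s => rfl
  set fw : (ℝ × (Fin k → ℝ)) →L[ℝ] (ℝ × (Fin k → ℝ)) :=
    D₀.prod (ContinuousLinearMap.snd ℝ ℝ (Fin k → ℝ)) with hfwdef
  set bw : (ℝ × (Fin k → ℝ)) →L[ℝ] (ℝ × (Fin k → ℝ)) :=
    (c⁻¹ • (ContinuousLinearMap.fst ℝ ℝ (Fin k → ℝ) -
      Bc.comp (ContinuousLinearMap.snd ℝ ℝ (Fin k → ℝ)))).prod
      (ContinuousLinearMap.snd ℝ ℝ (Fin k → ℝ)) with hbwdef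
  have hfw_apply : ∀ p : ℝ × (Fin k → ℝ), fw p = (D₀ p, p.2) := fun p => rfl
  have hbw_apply : ∀ p : ℝ × (Fin k → ℝ), bw p = (c⁻¹ * (p.1 - Bc p.2), p.2) := by
    intro p
    simp [hbwdef, ContinuousLinearMap.prod_apply, smul_eq_mul]
  have hD₀_decomp : ∀ p : ℝ × (Fin k → ℝ), D₀ p = p.1 * c + Bc p.2 := by
    intro p
    rw [hBc_apply, hcdef]
    exact clm_decomp D₀ p.1 p.2
  have hleft : Function.LeftInverse bw fw := by
    intro p
    rw [hfw_apply, hbw_apply]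
    have h1 : ((D₀ p, p.2) : ℝ × (Fin k → ℝ)).1 = D₀ p := rfl
    rw [Prod.ext_iff]
    constructor
    · rw [h1, hD₀_decomp]
      show c⁻¹ * (p.1 * c + Bc p.2 - Bc p.2) = p.1
      field_simp
      ring
    · rfl
  have hright : Function.RightInverse bw fw := by
    intro p
    rw [hbw_apply, hfw_apply]
    rw [Prod.ext_iff]
    constructor
    · show D₀ (c⁻¹ * (p.1 - Bc p.2), p.2) = p.1
      rw [hD₀_decomp]
      show c⁻¹ * (p.1 - Bc p.2) * c + Bc p.2 = p.1
      field_simp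
      ring
    · rfl
  set Φe := ContinuousLinearEquiv.equivOfInverse fw bw hleft hright with hΦedef
  set Φ : ℝ × (Fin k → ℝ) → ℝ × (Fin k → ℝ) := fun p => (vv k u p, p.2) with hΦdef
  have hΦderiv : HasFDerivAt Φ (Φe : (ℝ × (Fin k → ℝ)) →L[ℝ] (ℝ × (Fin k → ℝ)))
      ((0:ℝ), s₀) := by
    have h1 : HasFDerivAt Φ fw ((0:ℝ), s₀) := hDv₀.prodMk (hasFDerivAt_snd)
    exact h1
  have hΦc : ContDiffAt ℝ 1 Φ ((0:ℝ), s₀) := by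
    have h1 : ContDiffOn ℝ 1 Φ (ball ((0:ℝ), s₀) ε) :=
      (vv_contDiffOn hWopen hu hεpos hKW).prodMk contDiff_snd.contDiffOn
    exact h1.contDiffAt (isOpen_ball.mem_nhds hp₀U)
  have hstrict : HasStrictFDerivAt Φ (Φe : (ℝ × (Fin k → ℝ)) →L[ℝ] (ℝ × (Fin k → ℝ)))
      ((0:ℝ), s₀) := hΦc.hasStrictFDerivAt' hΦderiv one_ne_zero
  set Λ := hstrict.toOpenPartialHomeomorph Φ with hΛdef
  have hsource : ((0:ℝ), s₀) ∈ Λ.source := hstrict.mem_toOpenPartialHomeomorph_source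
  have hcoe : ⇑Λ = Φ := rfl
  have hvz : vv k u ((0:ℝ), s₀) = 0 := by rw [vv_zero]; exact hut
  have hΦ0 : Φ ((0:ℝ), s₀) = ((0:ℝ), s₀) := by simp [hΦdef, hvz]
  have htarget : ((0:ℝ), s₀) ∈ Λ.target := by
    have := Λ.map_source hsource
    rwa [hcoe, hΦ0] at this
  have hsymmCD : ContDiffAt ℝ 1 (⇑Λ.symm) ((0:ℝ), s₀) := by
    have h := hΦc.to_localInverse (f' := Φe) hΦderiv one_ne_zero
    rw [hΦ0] at h
    exact h
  have hsymmStrict : HasStrictFDerivAt (⇑Λ.symm)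
      ((Φe.symm : (ℝ × (Fin k → ℝ)) →L[ℝ] (ℝ × (Fin k → ℝ)))) ((0:ℝ), s₀) := by
    have h := hstrict.to_localInverse
    rw [hΦ0] at h
    exact h
  obtain ⟨ρ, hρpos, hρsub⟩ :
      ∃ ρ > 0, ball ((0:ℝ), s₀) ρ ⊆ Λ.source ∩ ball ((0:ℝ), s₀) ε := by
    have hopen : IsOpen (Λ.source ∩ ball ((0:ℝ), s₀) ε) := Λ.open_source.inter isOpen_ball
    obtain ⟨ρ, hρ, h⟩ := Metric.isOpen_iff.1 hopen _ ⟨hsource, hp₀U⟩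
    exact ⟨ρ, hρ, h⟩
  set T : (Fin k → ℝ) → ℝ := fun s => (Λ.symm ((0:ℝ), s)).1 with hTdef
  obtain ⟨O, hO, hOcd⟩ := hsymmCD.contDiffOn le_rfl (by norm_num)
  set ι : (Fin k → ℝ) → ℝ × (Fin k → ℝ) := fun s => ((0:ℝ), s) with hιdef
  have hιcont : Continuous ι := by rw [hιdef]; fun_prop
  have hιd : HasFDerivAt ι (ContinuousLinearMap.inr ℝ ℝ (Fin k → ℝ)) s₀ :=
    (ContinuousLinearMap.inr ℝ ℝ (Fin k → ℝ)).hasFDerivAt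
  have hV₂ : ι ⁻¹' O ∈ 𝓝 s₀ := hιcont.continuousAt.preimage_mem_nhds hO
  have hTcd : ContDiffOn ℝ 1 T (ι ⁻¹' O) := by
    have h1 : ContDiffOn ℝ 1 ι (ι ⁻¹' O) :=
      (contDiff_const.prodMk contDiff_id).contDiffOn
    have h2 := hOcd.comp h1 (fun s hs => hs)
    have h3 := contDiff_fst.comp_contDiffOn h2
    exact h3
  have hN₁ : {s : Fin k → ℝ | ((0:ℝ), s) ∈ Λ.target} ∈ 𝓝 s₀ :=
    (Λ.open_target.preimage hιcont).mem_nhds htarget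
  have hTs₀ : T s₀ = 0 := by
    have h1 : Λ.symm ((0:ℝ), s₀) = ((0:ℝ), s₀) := by
      have := Λ.left_inv hsource
      rwa [hcoe, hΦ0] at this
    rw [hTdef]
    simp [h1]
  have hkey : ∀ s : Fin k → ℝ, ((0:ℝ), s) ∈ Λ.target →
      Λ.symm ((0:ℝ), s) = (T s, s) ∧ vv k u (T s, s) = 0 := by
    intro s hs
    have h1 : Φ (Λ.symm ((0:ℝ), s)) = ((0:ℝ), s) := by
      have := Λ.right_inv hs
      rwa [hcoe] at this
    have h2 : (Λ.symm ((0:ℝ), s)).2 = s := by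
      have := (Prod.ext_iff.1 h1).2
      simpa [hΦdef] using this
    have h3 : Λ.symm ((0:ℝ), s) = (T s, s) := by
      exact Prod.ext_iff.2 ⟨rfl, h2⟩
    have h4 : vv k u (T s, s) = 0 := by
      have h5 : vv k u (Λ.symm ((0:ℝ), s)) = 0 := by
        have := (Prod.ext_iff.1 h1).1
        simpa [hΦdef] using this
      rwa [h3] at h5
    exact ⟨h3, h4⟩
  have hTcont : ContinuousAt T s₀ := by
    have h1 : ContinuousAt (⇑Λ.symm) ((0:ℝ), s₀) := Λ.continuousAt_symm htarget
    exact continuous_fst.continuousAt.comp (h1.comp hιcont.continuousAt)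
  have hsmall : ∀ᶠ s in 𝓝 s₀, |T s| < ρ := by
    have h0 : |T s₀| < ρ := by rw [hTs₀]; simpa using hρpos
    exact hTcont.abs.eventually_lt_const h0
  have hprodball : ∀ (t : ℝ) (s : Fin k → ℝ), |t| < ρ → s ∈ ball s₀ ρ →
      ((t, s) : ℝ × (Fin k → ℝ)) ∈ ball ((0:ℝ), s₀) ρ := by
    intro t s h1 h2
    rw [mem_ball] at h2 ⊢
    rw [Prod.dist_eq]
    refine max_lt ?_ h2
    rwa [Real.dist_eq, sub_zero]
  set V := {s : Fin k → ℝ | ((0:ℝ), s) ∈ Λ.target} ∩ (ι ⁻¹' O) ∩ {s | |T s| < ρ} ∩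
    ball s₀ ρ ∩ {s | u 0 s = 0} with hVdef
  have hV : V ∈ 𝓝 s₀ :=
    Filter.inter_mem (Filter.inter_mem (Filter.inter_mem (Filter.inter_mem hN₁ hV₂)
      hsmall) (ball_mem_nhds s₀ hρpos)) hu0
  have huniq : ∀ s ∈ V, ∀ t : ℝ, |t| < ρ → vv k u (t, s) = 0 → t = T s := by
    intro s hs t ht hv
    have hmem : ((t, s) : ℝ × (Fin k → ℝ)) ∈ Λ.source :=
      (hρsub (hprodball t s ht hs.1.2)).1
    have hΦts : Λ (t, s) = ((0:ℝ), s) := by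
      rw [hcoe]
      simp [hΦdef, hv]
    have h1 := Λ.left_inv hmem
    rw [hΦts] at h1
    have h2 := (hkey s hs.1.1.1.1).1
    have h3 : ((t, s) : ℝ × (Fin k → ℝ)) = (T s, s) := h1.symm.trans h2
    exact (Prod.ext_iff.1 h3).1
  refine ⟨V, hV, T, ρ, hρpos, hTcd.mono (fun s hs => hs.1.1.1.2), hTs₀, ?_, ?_, ?_, ?_, ?_⟩
  · intro s hs
    exact (hkey s hs.1.1.1.1).2
  · intro s hs
    have h1 := u_eq_mul_vv hWopen hu hεpos hKW
      (hρsub (hprodball (T s) s hs.1.1.2 hs.1.2)).2 hs.2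
    rw [h1, (hkey s hs.1.1.1.1).2, mul_zero]
  · intro s hs
    exact ⟨hs.1.1.2, fun t ht hvt => huniq s hs t ht hvt⟩
  · intro T' hT' s hs
    exact huniq s hs (T' s) (hT' s hs).1 (hT' s hs).2
  · have hTd : HasFDerivAt T ((ContinuousLinearMap.fst ℝ ℝ (Fin k → ℝ)).comp
        (((Φe.symm : (ℝ × (Fin k → ℝ)) →L[ℝ] (ℝ × (Fin k → ℝ)))).comp
          (ContinuousLinearMap.inr ℝ ℝ (Fin k → ℝ)))) s₀ := by
      have h1 := hsymmStrict.hasFDerivAt.comp s₀ hιd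
      have h2 := (ContinuousLinearMap.fst ℝ ℝ (Fin k → ℝ)).hasFDerivAt.comp s₀ h1
      simpa [Function.comp_def] using h2
    have hRd : HasFDerivAt (fun s : Fin k → ℝ => deriv (fun t => u t s) 0)
        (D₀.comp (ContinuousLinearMap.inr ℝ ℝ (Fin k → ℝ))) s₀ := by
      have h1 := hDv₀.comp s₀ hιd
      have h2 : HasFDerivAt (fun s : Fin k → ℝ => vv k u ((0:ℝ), s))
          (D₀.comp (ContinuousLinearMap.inr ℝ ℝ (Fin k → ℝ))) s₀ := by
        simpa [Function.comp_def] using h1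
      have heq : (fun s : Fin k → ℝ => vv k u ((0:ℝ), s))
          = fun s : Fin k → ℝ => deriv (fun t => u t s) 0 :=
        funext fun s => vv_zero s
      rwa [heq] at h2
    rw [hTd.fderiv, hRd.fderiv]
    refine ContinuousLinearMap.ext fun s => ?_
    have hsymm_app : (Φe.symm : (ℝ × (Fin k → ℝ)) →L[ℝ] (ℝ × (Fin k → ℝ)))
        ((0:ℝ), s) = bw ((0:ℝ), s) := by
      rw [hΦedef, ContinuousLinearEquiv.symm_equivOfInverse]
      rfl
    rw [ContinuousLinearMap.comp_apply, ContinuousLinearMap.comp_apply,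
      ContinuousLinearMap.smul_apply, ContinuousLinearMap.comp_apply]
    have hinr : (ContinuousLinearMap.inr ℝ ℝ (Fin k → ℝ)) s = ((0:ℝ), s) := rfl
    rw [hinr, hsymm_app, hbw_apply]
    show c⁻¹ * ((0:ℝ) - Bc s) = (-2 / d) * D₀ ((0:ℝ), s)
    rw [hBc_apply, hc, zero_sub]
    field_simp
end
end
end
end
end

section
/- Let u be a C⁴ real-valued function on an open neighborhood of (0, s₀) in ℝ × ℝ such that u(0, s) = 0 for all s near s₀, ∂ₜu(0, s₀) = 0, and ∂ₜ²u(0, s₀) ≠ 0, and let T be the unique C² function with T(s₀) = 0 solving v(T(s), s) = 0, where u(t, s) = t·v(t, s) and v(t, s) = ∫₀¹ ∂ₜu(σt, s) dσ. Then the second derivative of T at s₀ is T''(s₀) = −(2/∂ₜ²u(0,s₀))·[∂ₜ∂ₛ²u(0,s₀) + ∂ₜ²∂ₛu(0,s₀)·T'(s₀) + (1/3)·∂ₜ³u(0,s₀)·T'(s₀)²]. -/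
open Filter Topology

noncomputable section

private lemma hasDerivAt_slice1 {f : ℝ×ℝ → ℝ} {L : ℝ×ℝ →L[ℝ] ℝ} {t s : ℝ}
    (hf : HasFDerivAt f L (t, s)) : HasDerivAt (fun τ => f (τ, s)) (L (1,0)) t := by
  have h : HasDerivAt (fun τ : ℝ => (τ, s)) ((1:ℝ), (0:ℝ)) t :=
    (hasDerivAt_id t).prodMk (hasDerivAt_const t s)
  simpa [Function.comp_def] using hf.comp_hasDerivAt t h

private lemma hasDerivAt_slice2 {f : ℝ×ℝ → ℝ} {L : ℝ×ℝ →L[ℝ] ℝ} {t s : ℝ}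
    (hf : HasFDerivAt f L (t, s)) : HasDerivAt (fun y => f (t, y)) (L (0,1)) s := by
  have h : HasDerivAt (fun y : ℝ => (t, y)) ((0:ℝ), (1:ℝ)) s :=
    (hasDerivAt_const s t).prodMk (hasDerivAt_id s)
  simpa [Function.comp_def] using hf.comp_hasDerivAt s h

private lemma hasDerivAt_curve {f : ℝ×ℝ → ℝ} {L : ℝ×ℝ →L[ℝ] ℝ} {c : ℝ → ℝ} {c' x : ℝ}
    (hf : HasFDerivAt f L (c x, x)) (hc : HasDerivAt c c' x) :
    HasDerivAt (fun y => f (c y, y)) (c' * L (1,0) + L (0,1)) x := by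
  have h : HasDerivAt (fun y : ℝ => (c y, y)) ((c', (1:ℝ))) x := hc.prodMk (hasDerivAt_id x)
  have h2 := hf.comp_hasDerivAt_of_eq x h rfl
  have e : ((c', (1:ℝ)) : ℝ × ℝ) = c' • ((1:ℝ),(0:ℝ)) + ((0:ℝ),(1:ℝ)) := by
    simp [Prod.ext_iff]
  rw [e, map_add, map_smul] at h2
  simpa [smul_eq_mul, Function.comp_def] using h2

private lemma contDiffOn_fderiv_apply {f : ℝ×ℝ → ℝ} {W : Set (ℝ×ℝ)} (hW : IsOpen W)
    {n m : WithTop ℕ∞} (hf : ContDiffOn ℝ n f W) (hmn : m + 1 ≤ n) (v : ℝ×ℝ) :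
    ContDiffOn ℝ m (fun p => fderiv ℝ f p v) W :=
  (hf.fderiv_of_isOpen hW hmn).clm_apply contDiffOn_const

private lemma fderiv_swap {f : ℝ×ℝ → ℝ} {W : Set (ℝ×ℝ)} (hW : IsOpen W)
    (hf : ContDiffOn ℝ 2 f W) {p : ℝ×ℝ} (hp : p ∈ W) (v w : ℝ×ℝ) :
    fderiv ℝ (fun q => fderiv ℝ f q v) p w = fderiv ℝ (fun q => fderiv ℝ f q w) p v := by
  have hF : DifferentiableAt ℝ (fderiv ℝ f) p :=
    ((hf.fderiv_of_isOpen hW (m := 1) (by norm_num)).differentiableOn (by norm_num)).differentiableAt (hW.mem_nhds hp)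
  have hsymm : ∀ a b : ℝ×ℝ, fderiv ℝ (fderiv ℝ f) p a b = fderiv ℝ (fderiv ℝ f) p b a := by
    intro a b
    apply second_derivative_symmetric_of_eventually (f := f) (f' := fderiv ℝ f) (x := p)
    · filter_upwards [hW.mem_nhds hp] with q hq
      exact (((hf.differentiableOn (by norm_num)).differentiableAt (hW.mem_nhds hq))).hasFDerivAt
    · exact hF.hasFDerivAt
  have key : ∀ a : ℝ×ℝ, ∀ b : ℝ×ℝ,
      fderiv ℝ (fun q => fderiv ℝ f q a) p b = fderiv ℝ (fderiv ℝ f) p b a := by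
    intro a b
    rw [fderiv_clm_apply hF (differentiableAt_const a)]
    simp
  rw [key, key, hsymm]

/-- the quadratic coefficient of the nontrivial return time at a fold point.
If `u` is `C⁴` near `(0,s₀) ∈ ℝ × ℝ` with `u(0,s) = 0` for `s` near `s₀`, `∂ₜu(0,s₀) = 0`,
`∂ₜ²u(0,s₀) ≠ 0`, and `T` is the `C²` function with `T(s₀) = 0` solving `v(T(s),s) = 0`
(where `u(t,s) = t·v(t,s)`, `v(t,s) = ∫₀¹ ∂ₜu(σt,s)dσ`), then
`T''(s₀) = −(2/∂ₜ²u(0,s₀))·[∂ₜ∂ₛ²u(0,s₀) + ∂ₜ²∂ₛu(0,s₀)·T'(s₀) + (1/3)∂ₜ³u(0,s₀)·T'(s₀)²]`. -/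
theorem stmt1 (u : ℝ → ℝ → ℝ) (s₀ : ℝ)
    (W : Set (ℝ × ℝ)) (hWopen : IsOpen W) (hW0 : ((0 : ℝ), s₀) ∈ W)
    (hu : ContDiffOn ℝ 4 (fun p => u p.1 p.2) W)
    (hu0 : ∀ᶠ s in 𝓝 s₀, u 0 s = 0)
    (hut : deriv (fun t => u t s₀) 0 = 0)
    (hutt : iteratedDeriv 2 (fun t => u t s₀) 0 ≠ 0)
    (T : ℝ → ℝ) (hT0 : T s₀ = 0) (hTC2 : ContDiffAt ℝ 2 T s₀)
    (hTroot : ∀ᶠ s in 𝓝 s₀, (∫ σ in (0:ℝ)..1, deriv (fun τ => u τ s) (σ * T s)) = 0) :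
    iteratedDeriv 2 T s₀ = -(2 / iteratedDeriv 2 (fun t => u t s₀) 0) *
      (iteratedDeriv 2 (fun s => deriv (fun t => u t s) 0) s₀
        + deriv (fun s => iteratedDeriv 2 (fun t => u t s) 0) s₀ * deriv T s₀
        + 1 / 3 * iteratedDeriv 3 (fun t => u t s₀) 0 * deriv T s₀ ^ 2) := by
  classical
  set u0 : ℝ × ℝ → ℝ := fun p => u p.1 p.2 with hu0def
  set u1 : ℝ × ℝ → ℝ := fun p => fderiv ℝ u0 p (1,0) with hu1def
  set u2 : ℝ × ℝ → ℝ := fun p => fderiv ℝ u1 p (1,0) with hu2def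
  set u3 : ℝ × ℝ → ℝ := fun p => fderiv ℝ u2 p (1,0) with hu3def
  set q1 : ℝ × ℝ → ℝ := fun p => fderiv ℝ u1 p (0,1) with hq1def
  set q2 : ℝ × ℝ → ℝ := fun p => fderiv ℝ u2 p (0,1) with hq2def
  set r1 : ℝ × ℝ → ℝ := fun p => fderiv ℝ q1 p (0,1) with hr1def
  set r2 : ℝ × ℝ → ℝ := fun p => fderiv ℝ q1 p (1,0) with hr2def
  -- smoothness
  have hu1s : ContDiffOn ℝ 3 u1 W := contDiffOn_fderiv_apply hWopen hu (by norm_num) _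
  have hu2s : ContDiffOn ℝ 2 u2 W := contDiffOn_fderiv_apply hWopen hu1s (by norm_num) _
  have hq1s : ContDiffOn ℝ 2 q1 W := contDiffOn_fderiv_apply hWopen hu1s (by norm_num) _
  have hu3s : ContDiffOn ℝ 1 u3 W := contDiffOn_fderiv_apply hWopen hu2s (by norm_num) _
  have hq2s : ContDiffOn ℝ 1 q2 W := contDiffOn_fderiv_apply hWopen hu2s (by norm_num) _
  have hr1s : ContDiffOn ℝ 1 r1 W := contDiffOn_fderiv_apply hWopen hq1s (by norm_num) _
  have hr2s : ContDiffOn ℝ 1 r2 W := contDiffOn_fderiv_apply hWopen hq1s (by norm_num) _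
  have hdiff : ∀ (f : ℝ×ℝ→ℝ) (n : WithTop ℕ∞), ContDiffOn ℝ n f W → 1 ≤ n → ∀ p ∈ W,
      HasFDerivAt f (fderiv ℝ f p) p := fun f n hf hn p hp =>
    ((hf.differentiableOn (zero_lt_one.trans_le hn).ne').differentiableAt (hWopen.mem_nhds hp)).hasFDerivAt
  -- T regularity on an open neighborhood U'
  obtain ⟨U, hUmem, hTU⟩ : ∃ U ∈ 𝓝 s₀, ContDiffOn ℝ 2 T U :=
    hTC2.contDiffOn le_rfl (by simp)
  obtain ⟨U', hU'U, hU'open, hs₀U'⟩ := mem_nhds_iff.1 hUmem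
  have hTU' : ContDiffOn ℝ 2 T U' := hTU.mono hU'U
  have h11 : ContDiffOn ℝ ((1:ℕ∞) + 1) T U' := by
    convert hTU' using 2
    norm_num
  have hTd : DifferentiableOn ℝ T U' :=
    ((contDiffOn_succ_iff_deriv_of_isOpen hU'open).1 h11).1
  have hdT1 : ContDiffOn ℝ 1 (deriv T) U' :=
    ((contDiffOn_succ_iff_deriv_of_isOpen hU'open).1 h11).2.2
  have h01 : ContDiffOn ℝ ((0:ℕ∞) + 1) (deriv T) U' := by
    convert hdT1 using 2
    norm_num
  have hdTd : DifferentiableOn ℝ (deriv T) U' :=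
    ((contDiffOn_succ_iff_deriv_of_isOpen hU'open).1 h01).1
  have hddTc : ContinuousOn (deriv (deriv T)) U' :=
    contDiffOn_zero.1 ((contDiffOn_succ_iff_deriv_of_isOpen hU'open).1 h01).2.2
  have hTderiv : ∀ x ∈ U', HasDerivAt T (deriv T x) x := fun x hx =>
    ((hTd x hx).differentiableAt (hU'open.mem_nhds hx)).hasDerivAt
  have hTderiv2 : ∀ x ∈ U', HasDerivAt (deriv T) (deriv (deriv T) x) x := fun x hx =>
    ((hdTd x hx).differentiableAt (hU'open.mem_nhds hx)).hasDerivAt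
  -- geometric setup
  obtain ⟨ε, hε, hballW⟩ := Metric.isOpen_iff.1 hWopen _ hW0
  have hTcont : ContinuousAt T s₀ := ((hTd s₀ hs₀U').differentiableAt
    (hU'open.mem_nhds hs₀U')).continuousAt
  obtain ⟨δ₁, hδ₁, hδ₁T⟩ : ∃ δ₁ > 0, ∀ s, dist s s₀ < δ₁ → |T s| < ε/2 := by
    have := Metric.continuousAt_iff.1 hTcont (ε/2) (by linarith)
    obtain ⟨δ₁, h1, h2⟩ := this
    exact ⟨δ₁, h1, fun s hs => by simpa [hT0, Real.dist_eq] using h2 hs⟩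
  obtain ⟨δ₂, hδ₂, hδ₂U⟩ := Metric.isOpen_iff.1 hU'open _ hs₀U'
  set δ : ℝ := min (min (δ₁/2) (δ₂/2)) (ε/4) with hδdef
  have hδpos : 0 < δ := by positivity
  have hδU : Metric.closedBall s₀ δ ⊆ U' := fun s hs => hδ₂U (by
    simp only [Metric.mem_closedBall] at hs
    simp only [Metric.mem_ball]
    calc dist s s₀ ≤ δ := hs
      _ ≤ δ₂/2 := le_trans (min_le_left _ _) (min_le_right _ _)
      _ < δ₂ := by linarith)
  have hδT : ∀ s ∈ Metric.closedBall s₀ δ, |T s| ≤ ε/2 := fun s hs => le_of_lt (hδ₁T s (by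
    simp only [Metric.mem_closedBall] at hs
    calc dist s s₀ ≤ δ := hs
      _ ≤ δ₁/2 := le_trans (min_le_left _ _) (min_le_left _ _)
      _ < δ₁ := by linarith))
  have hδε : δ ≤ ε/4 := min_le_right _ _
  -- membership facts
  set K : Set (ℝ × ℝ) := Metric.closedBall 0 (ε/2) ×ˢ Metric.closedBall s₀ δ with hKdef
  have hKcompact : IsCompact K := (isCompact_closedBall _ _).prod (isCompact_closedBall _ _)
  have hKW : K ⊆ W := by
    rintro ⟨t, s⟩ ⟨ht, hs⟩
    apply hballW
    simp only [Metric.mem_closedBall] at ht hs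
    simp only [Metric.mem_ball, Prod.dist_eq]
    apply max_lt (lt_of_le_of_lt ht (by linarith)) (lt_of_le_of_lt hs (by linarith))
  have hmemK : ∀ s ∈ Metric.closedBall s₀ δ, ∀ σ ∈ Set.Icc (0:ℝ) 1, (σ * T s, s) ∈ K := by
    intro s hs σ hσ
    refine ⟨?_, hs⟩
    simp only [Metric.mem_closedBall, Real.dist_eq, sub_zero]
    calc |σ * T s| = |σ| * |T s| := abs_mul _ _
      _ ≤ 1 * (ε/2) := by
          apply mul_le_mul (by rw [abs_of_nonneg hσ.1]; exact hσ.2) (hδT s hs)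
            (abs_nonneg _) zero_le_one
      _ = ε/2 := one_mul _
  have hmemW : ∀ s ∈ Metric.closedBall s₀ δ, ∀ σ ∈ Set.Icc (0:ℝ) 1, (σ * T s, s) ∈ W :=
    fun s hs σ hσ => hKW (hmemK s hs σ hσ)
  have h0sW : ∀ s ∈ Metric.closedBall s₀ δ, ((0:ℝ), s) ∈ W := by
    intro s hs
    have := hmemK s hs 0 (by norm_num)
    simpa using hKW this
  -- bounds on compact sets
  have exB : ∀ (f : ℝ×ℝ→ℝ), ContinuousOn f W → ∃ C, 0 ≤ C ∧ ∀ p ∈ K, |f p| ≤ C := by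
    intro f hf
    obtain ⟨C, hC⟩ := hKcompact.exists_bound_of_continuousOn (hf.mono hKW)
    exact ⟨max C 0, le_max_right _ _, fun p hp => le_trans (hC p hp) (le_max_left _ _)⟩
  obtain ⟨C2, hC2nn, hC2⟩ := exB u2 (hu2s.continuousOn)
  obtain ⟨Cq1, hCq1nn, hCq1⟩ := exB q1 (hq1s.continuousOn)
  obtain ⟨C3, hC3nn, hC3⟩ := exB u3 (hu3s.continuousOn)
  obtain ⟨Cq2, hCq2nn, hCq2⟩ := exB q2 (hq2s.continuousOn)
  obtain ⟨Cr1, hCr1nn, hCr1⟩ := exB r1 (hr1s.continuousOn)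
  obtain ⟨Cr2, hCr2nn, hCr2⟩ := exB r2 (hr2s.continuousOn)
  obtain ⟨B1, hB1⟩ := (isCompact_closedBall s₀ δ).exists_bound_of_continuousOn
    (hdT1.continuousOn.mono hδU)
  obtain ⟨B2, hB2⟩ := (isCompact_closedBall s₀ δ).exists_bound_of_continuousOn
    (hddTc.mono hδU)
  have hB1nn : 0 ≤ B1 := le_trans (norm_nonneg _) (hB1 s₀ (Metric.mem_closedBall_self hδpos.le))
  -- integrands
  set ψ : ℝ → ℝ → ℝ := fun x σ => (σ * deriv T x) * u2 (σ * T x, x) + q1 (σ * T x, x) with hψdef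
  set Φ : ℝ → ℝ → ℝ := fun x σ =>
    ((σ * deriv (deriv T) x) * u2 (σ * T x, x)
      + (σ * deriv T x) * ((σ * deriv T x) * u3 (σ * T x, x) + q2 (σ * T x, x)))
    + ((σ * deriv T x) * r2 (σ * T x, x) + r1 (σ * T x, x)) with hΦdef
  -- derivative of inner functions
  have hψd : ∀ x ∈ Metric.ball s₀ δ, ∀ σ ∈ Set.Icc (0:ℝ) 1,
      HasDerivAt (fun y => u1 (σ * T y, y)) (ψ x σ) x := by
    intro x hx σ hσ
    have hx' : x ∈ Metric.closedBall s₀ δ := Metric.ball_subset_closedBall hx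
    have hγ : (σ * T x, x) ∈ W := hmemW x hx' σ hσ
    have hc : HasDerivAt (fun y => σ * T y) (σ * deriv T x) x :=
      (hTderiv x (hδU hx')).const_mul σ
    exact hasDerivAt_curve (hdiff u1 3 hu1s (by norm_num) _ hγ) hc
  have hΦd : ∀ x ∈ Metric.ball s₀ δ, ∀ σ ∈ Set.Icc (0:ℝ) 1,
      HasDerivAt (fun y => ψ y σ) (Φ x σ) x := by
    intro x hx σ hσ
    have hx' : x ∈ Metric.closedBall s₀ δ := Metric.ball_subset_closedBall hx
    have hγ : (σ * T x, x) ∈ W := hmemW x hx' σ hσ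
    have hc : HasDerivAt (fun y => σ * T y) (σ * deriv T x) x :=
      (hTderiv x (hδU hx')).const_mul σ
    have h1 : HasDerivAt (fun y => σ * deriv T y) (σ * deriv (deriv T) x) x :=
      (hTderiv2 x (hδU hx')).const_mul σ
    have h2 : HasDerivAt (fun y => u2 (σ * T y, y))
        ((σ * deriv T x) * u3 (σ * T x, x) + q2 (σ * T x, x)) x :=
      hasDerivAt_curve (hdiff u2 2 hu2s (by norm_num) _ hγ) hc
    have h3 : HasDerivAt (fun y => q1 (σ * T y, y))
        ((σ * deriv T x) * r2 (σ * T x, x) + r1 (σ * T x, x)) x :=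
      hasDerivAt_curve (hdiff q1 2 hq1s (by norm_num) _ hγ) hc
    exact (h1.mul h2).add h3
  -- continuity in σ
  have hcomp : ∀ (f : ℝ×ℝ→ℝ), ContinuousOn f W → ∀ x ∈ Metric.closedBall s₀ δ,
      ContinuousOn (fun σ => f (σ * T x, x)) (Set.Icc (0:ℝ) 1) := by
    intro f hf x hx
    apply hf.comp (Continuous.continuousOn ((continuous_id.mul continuous_const).prodMk continuous_const)) (fun σ hσ => hmemW x hx σ hσ)
  have hcontψ : ∀ x ∈ Metric.closedBall s₀ δ, ContinuousOn (ψ x) (Set.Icc (0:ℝ) 1) := by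
    intro x hx
    exact (((continuous_id.mul continuous_const).continuousOn).mul
      (hcomp u2 hu2s.continuousOn x hx)).add (hcomp q1 hq1s.continuousOn x hx)
  have hcontu1x : ∀ x ∈ Metric.closedBall s₀ δ,
      ContinuousOn (fun σ => u1 (σ * T x, x)) (Set.Icc (0:ℝ) 1) :=
    fun x hx => hcomp u1 hu1s.continuousOn x hx
  have hIoc : Set.uIoc (0:ℝ) 1 ⊆ Set.Icc (0:ℝ) 1 := by
    rw [Set.uIoc_of_le (by norm_num : (0:ℝ) ≤ 1)]
    exact Set.Ioc_subset_Icc_self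
  have hIcc : Set.uIcc (0:ℝ) 1 = Set.Icc (0:ℝ) 1 := Set.uIcc_of_le (by norm_num)
  -- step 0: rewrite the root equation
  have hg : ∀ᶠ s in 𝓝 s₀, (∫ σ in (0:ℝ)..1, u1 (σ * T s, s)) = 0 := by
    filter_upwards [hTroot, Metric.closedBall_mem_nhds s₀ hδpos] with s hs hsδ
    have hcong : (∫ σ in (0:ℝ)..1, u1 (σ * T s, s))
        = ∫ σ in (0:ℝ)..1, deriv (fun τ => u τ s) (σ * T s) := by
      apply intervalIntegral.integral_congr
      intro σ hσ
      rw [hIcc] at hσ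
      have hp := hmemW s hsδ σ hσ
      have hd := hasDerivAt_slice1 (hdiff u0 4 hu (by norm_num) _ hp)
      exact (hd.deriv).symm
    rw [hcong]; exact hs
  -- step 1: differentiate under the integral at each point of the ball
  have step1 : ∀ x ∈ Metric.ball s₀ δ,
      HasDerivAt (fun y => ∫ σ in (0:ℝ)..1, u1 (σ * T y, y)) (∫ σ in (0:ℝ)..1, ψ x σ) x := by
    intro x hx
    have hx' : x ∈ Metric.closedBall s₀ δ := Metric.ball_subset_closedBall hx
    set ρ : ℝ := δ - dist x s₀ with hρdef
    have hρpos : 0 < ρ := sub_pos.2 (Metric.mem_ball.1 hx)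
    have hsub : Metric.ball x ρ ⊆ Metric.ball s₀ δ := by
      intro y hy
      rw [Metric.mem_ball] at hy ⊢
      calc dist y s₀ ≤ dist y x + dist x s₀ := dist_triangle _ _ _
        _ < ρ + dist x s₀ := by linarith
        _ = δ := by rw [hρdef]; ring
    have key := intervalIntegral.hasDerivAt_integral_of_dominated_loc_of_deriv_le
      (F := fun y σ => u1 (σ * T y, y)) (F' := ψ) (x₀ := x)
      (bound := fun _ => B1 * C2 + Cq1) (a := (0:ℝ)) (b := 1)
      (μ := MeasureTheory.volume) (Metric.ball_mem_nhds x hρpos)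
      (by
        filter_upwards [Metric.ball_mem_nhds x hρpos] with y hy
        exact ((hcontu1x y (Metric.ball_subset_closedBall (hsub hy))).mono
          hIoc).aestronglyMeasurable measurableSet_uIoc)
      ((hIcc ▸ hcontu1x x hx').intervalIntegrable)
      (((hcontψ x hx').mono hIoc).aestronglyMeasurable measurableSet_uIoc)
      (by
        apply Filter.Eventually.of_forall
        intro σ hσ y hy
        have hy' : y ∈ Metric.closedBall s₀ δ := Metric.ball_subset_closedBall (hsub hy)
        have hσ' : σ ∈ Set.Icc (0:ℝ) 1 := hIoc hσ
        have hγK : (σ * T y, y) ∈ K := hmemK y hy' σ hσ'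
        have hσ1 : |σ| ≤ 1 := by rw [abs_of_nonneg hσ'.1]; exact hσ'.2
        have hdTb : |deriv T y| ≤ B1 := hB1 y hy'
        calc ‖ψ y σ‖ = |σ * deriv T y * u2 (σ * T y, y) + q1 (σ * T y, y)| := rfl
          _ ≤ |σ * deriv T y * u2 (σ * T y, y)| + |q1 (σ * T y, y)| := abs_add_le _ _
          _ ≤ 1 * B1 * C2 + Cq1 := by
              refine add_le_add ?_ (hCq1 _ hγK)
              rw [abs_mul, abs_mul]
              exact mul_le_mul (mul_le_mul hσ1 hdTb (abs_nonneg _) zero_le_one)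
                (hC2 _ hγK) (abs_nonneg _) (by positivity)
          _ = B1 * C2 + Cq1 := by ring)
      (intervalIntegrable_const)
      (by
        apply Filter.Eventually.of_forall
        intro σ hσ y hy
        exact hψd y (hsub hy) σ (hIoc hσ))
    exact key.2
  -- derivative of an eventually-zero function vanishes
  have deriv_zero_of_ev : ∀ (f : ℝ → ℝ) (x : ℝ) (d : ℝ), HasDerivAt f d x →
      (∀ᶠ y in 𝓝 x, f y = 0) → d = 0 := by
    intro f x d hd hev
    have h0 : HasDerivAt (fun _ : ℝ => (0:ℝ)) d x := by
      apply hd.congr_of_eventuallyEq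
      filter_upwards [hev] with y hy using hy.symm
    exact h0.unique (hasDerivAt_const x 0)
  have hψ0 : ∀ᶠ s in 𝓝 s₀, (∫ σ in (0:ℝ)..1, ψ s σ) = 0 := by
    obtain ⟨O, hO, hOopen, hs₀O⟩ := eventually_nhds_iff.1 hg
    filter_upwards [hOopen.mem_nhds hs₀O, Metric.ball_mem_nhds s₀ hδpos] with s hsO hsball
    apply deriv_zero_of_ev _ s _ (step1 s hsball)
    filter_upwards [hOopen.mem_nhds hsO] with y hy using hO y hy
  -- step 2: differentiate again at s₀
  have step2 : HasDerivAt (fun y => ∫ σ in (0:ℝ)..1, ψ y σ) (∫ σ in (0:ℝ)..1, Φ s₀ σ) s₀ := by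
    have hs₀cb : s₀ ∈ Metric.closedBall s₀ δ := Metric.mem_closedBall_self hδpos.le
    have key := intervalIntegral.hasDerivAt_integral_of_dominated_loc_of_deriv_le
      (F := ψ) (F' := Φ) (x₀ := s₀)
      (bound := fun _ => B2 * C2 + B1 * (B1 * C3 + Cq2) + (B1 * Cr2 + Cr1))
      (a := (0:ℝ)) (b := 1) (μ := MeasureTheory.volume) (Metric.ball_mem_nhds s₀ hδpos)
      (by
        filter_upwards [Metric.ball_mem_nhds s₀ hδpos] with y hy
        exact ((hcontψ y (Metric.ball_subset_closedBall hy)).mono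
          hIoc).aestronglyMeasurable measurableSet_uIoc)
      ((hIcc ▸ hcontψ s₀ hs₀cb).intervalIntegrable)
      (by
        have hcontΦ : ContinuousOn (Φ s₀) (Set.Icc (0:ℝ) 1) := by
          refine ContinuousOn.add (ContinuousOn.add ?_ ?_) (ContinuousOn.add ?_ ?_)
          · exact ((continuous_id.mul continuous_const).continuousOn).mul
              (hcomp u2 hu2s.continuousOn s₀ hs₀cb)
          · exact ((continuous_id.mul continuous_const).continuousOn).mul
              ((((continuous_id.mul continuous_const).continuousOn).mul
                (hcomp u3 hu3s.continuousOn s₀ hs₀cb)).add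
                (hcomp q2 hq2s.continuousOn s₀ hs₀cb))
          · exact ((continuous_id.mul continuous_const).continuousOn).mul
              (hcomp r2 hr2s.continuousOn s₀ hs₀cb)
          · exact hcomp r1 hr1s.continuousOn s₀ hs₀cb
        exact (hcontΦ.mono hIoc).aestronglyMeasurable measurableSet_uIoc)
      (by
        apply Filter.Eventually.of_forall
        intro σ hσ y hy
        have hy' : y ∈ Metric.closedBall s₀ δ := Metric.ball_subset_closedBall hy
        have hσ' : σ ∈ Set.Icc (0:ℝ) 1 := hIoc hσ
        have hγK : (σ * T y, y) ∈ K := hmemK y hy' σ hσ'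
        have hσ1 : |σ| ≤ 1 := by rw [abs_of_nonneg hσ'.1]; exact hσ'.2
        have hdTb : |deriv T y| ≤ B1 := hB1 y hy'
        have hddTb : |deriv (deriv T) y| ≤ B2 := hB2 y hy'
        have hB2nn : 0 ≤ B2 := le_trans (abs_nonneg _) hddTb
        have h1 : |σ * deriv (deriv T) y * u2 (σ * T y, y)| ≤ B2 * C2 := by
          rw [abs_mul, abs_mul]
          calc |σ| * |deriv (deriv T) y| * |u2 (σ * T y, y)| ≤ 1 * B2 * C2 :=
              mul_le_mul (mul_le_mul hσ1 hddTb (abs_nonneg _) zero_le_one)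
                (hC2 _ hγK) (abs_nonneg _) (by linarith)
            _ = B2 * C2 := by ring
        have hσdT : |σ * deriv T y| ≤ B1 := by
          rw [abs_mul]
          calc |σ| * |deriv T y| ≤ 1 * B1 := mul_le_mul hσ1 hdTb (abs_nonneg _) zero_le_one
            _ = B1 := one_mul _
        have h2 : |σ * deriv T y * (σ * deriv T y * u3 (σ * T y, y) + q2 (σ * T y, y))|
            ≤ B1 * (B1 * C3 + Cq2) := by
          rw [abs_mul]
          refine mul_le_mul hσdT ?_ (abs_nonneg _) hB1nn
          calc |σ * deriv T y * u3 (σ * T y, y) + q2 (σ * T y, y)|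
              ≤ |σ * deriv T y * u3 (σ * T y, y)| + |q2 (σ * T y, y)| := abs_add_le _ _
            _ ≤ B1 * C3 + Cq2 := by
                refine add_le_add ?_ (hCq2 _ hγK)
                rw [abs_mul]
                exact mul_le_mul hσdT (hC3 _ hγK) (abs_nonneg _) hB1nn
        have h3 : |σ * deriv T y * r2 (σ * T y, y) + r1 (σ * T y, y)| ≤ B1 * Cr2 + Cr1 := by
          calc |σ * deriv T y * r2 (σ * T y, y) + r1 (σ * T y, y)|
              ≤ |σ * deriv T y * r2 (σ * T y, y)| + |r1 (σ * T y, y)| := abs_add_le _ _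
            _ ≤ B1 * Cr2 + Cr1 := by
                refine add_le_add ?_ (hCr1 _ hγK)
                rw [abs_mul]
                exact mul_le_mul hσdT (hCr2 _ hγK) (abs_nonneg _) hB1nn
        calc ‖Φ y σ‖
            ≤ |σ * deriv (deriv T) y * u2 (σ * T y, y)
                + σ * deriv T y * (σ * deriv T y * u3 (σ * T y, y) + q2 (σ * T y, y))|
              + |σ * deriv T y * r2 (σ * T y, y) + r1 (σ * T y, y)| := abs_add_le _ _
          _ ≤ (B2 * C2 + B1 * (B1 * C3 + Cq2)) + (B1 * Cr2 + Cr1) := by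
              refine add_le_add (le_trans (abs_add_le _ _) (add_le_add h1 h2)) h3
          _ = B2 * C2 + B1 * (B1 * C3 + Cq2) + (B1 * Cr2 + Cr1) := by ring)
      (intervalIntegrable_const)
      (by
        apply Filter.Eventually.of_forall
        intro σ hσ y hy
        exact hΦd y hy σ (hIoc hσ))
    exact key.2
  have hΦ0 : (∫ σ in (0:ℝ)..1, Φ s₀ σ) = 0 := deriv_zero_of_ev _ s₀ _ step2 hψ0
  -- compute the integral of Φ s₀
  have polyint : ∀ A B C : ℝ, (∫ σ in (0:ℝ)..1, (A * σ^2 + B * σ + C)) = A/3 + B/2 + C := by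
    intro A B C
    have i1 : IntervalIntegrable (fun σ : ℝ => A * σ^2) MeasureTheory.volume 0 1 :=
      (Continuous.intervalIntegrable (by fun_prop) _ _)
    have i2 : IntervalIntegrable (fun σ : ℝ => B * σ) MeasureTheory.volume 0 1 :=
      (Continuous.intervalIntegrable (by fun_prop) _ _)
    have i3 : IntervalIntegrable (fun _ : ℝ => C) MeasureTheory.volume 0 1 :=
      intervalIntegrable_const
    rw [intervalIntegral.integral_add (i1.add i2) i3, intervalIntegral.integral_add i1 i2,
      intervalIntegral.integral_const_mul, intervalIntegral.integral_const_mul,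
      integral_pow, integral_id, intervalIntegral.integral_const]
    norm_num
    ring
  have hΦpoly : ∀ σ : ℝ, Φ s₀ σ =
      (deriv T s₀ ^ 2 * u3 (0, s₀)) * σ^2
      + (deriv (deriv T) s₀ * u2 (0, s₀) + deriv T s₀ * q2 (0, s₀)
          + deriv T s₀ * r2 (0, s₀)) * σ
      + r1 (0, s₀) := by
    intro σ
    simp only [hΦdef, hT0, mul_zero]
    ring
  have hE : (deriv T s₀ ^ 2 * u3 (0, s₀))/3
      + (deriv (deriv T) s₀ * u2 (0, s₀) + deriv T s₀ * q2 (0, s₀)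
          + deriv T s₀ * r2 (0, s₀))/2 + r1 (0, s₀) = 0 := by
    have hcong : (∫ σ in (0:ℝ)..1, Φ s₀ σ)
        = ∫ σ in (0:ℝ)..1, ((deriv T s₀ ^ 2 * u3 (0, s₀)) * σ^2
          + (deriv (deriv T) s₀ * u2 (0, s₀) + deriv T s₀ * q2 (0, s₀)
              + deriv T s₀ * r2 (0, s₀)) * σ + r1 (0, s₀)) :=
      intervalIntegral.integral_congr (fun σ _ => hΦpoly σ)
    rw [hcong, polyint] at hΦ0
    exact hΦ0
  -- identifications of iterated derivatives
  have hder_u : ∀ t s, (t, s) ∈ W → deriv (fun τ => u τ s) t = u1 (t, s) :=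
    fun t s hp => (hasDerivAt_slice1 (hdiff u0 4 hu (by norm_num) _ hp)).deriv
  have hder_u1 : ∀ t s, (t, s) ∈ W → deriv (fun τ => u1 (τ, s)) t = u2 (t, s) :=
    fun t s hp => (hasDerivAt_slice1 (hdiff u1 3 hu1s (by norm_num) _ hp)).deriv
  have hder_u2 : ∀ t s, (t, s) ∈ W → deriv (fun τ => u2 (τ, s)) t = u3 (t, s) :=
    fun t s hp => (hasDerivAt_slice1 (hdiff u2 2 hu2s (by norm_num) _ hp)).deriv
  have hder_u1' : ∀ t s, (t, s) ∈ W → deriv (fun y => u1 (t, y)) s = q1 (t, s) :=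
    fun t s hp => (hasDerivAt_slice2 (hdiff u1 3 hu1s (by norm_num) _ hp)).deriv
  have hder_u2' : ∀ t s, (t, s) ∈ W → deriv (fun y => u2 (t, y)) s = q2 (t, s) :=
    fun t s hp => (hasDerivAt_slice2 (hdiff u2 2 hu2s (by norm_num) _ hp)).deriv
  have hder_q1' : ∀ t s, (t, s) ∈ W → deriv (fun y => q1 (t, y)) s = r1 (t, s) :=
    fun t s hp => (hasDerivAt_slice2 (hdiff q1 2 hq1s (by norm_num) _ hp)).deriv
  have hWnhds1 : ∀ t s, (t, s) ∈ W → ∀ᶠ τ in 𝓝 t, (τ, s) ∈ W := by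
    intro t s hp
    have hc : Continuous (fun τ : ℝ => (τ, s)) := continuous_id.prodMk continuous_const
    exact hc.continuousAt.preimage_mem_nhds (hWopen.mem_nhds hp)
  have hWnhds2 : ∀ᶠ s in 𝓝 s₀, ((0:ℝ), s) ∈ W := by
    have hc : Continuous (fun s : ℝ => ((0:ℝ), s)) := continuous_const.prodMk continuous_id
    exact hc.continuousAt.preimage_mem_nhds (hWopen.mem_nhds hW0)
  have hiter2 : ∀ t s, (t, s) ∈ W → iteratedDeriv 2 (fun t' => u t' s) t = u2 (t, s) := by
    intro t s hp
    rw [show (2:ℕ) = 1+1 from rfl, iteratedDeriv_succ, iteratedDeriv_one]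
    have hev : deriv (fun t' => u t' s) =ᶠ[𝓝 t] fun t' => u1 (t', s) := by
      filter_upwards [hWnhds1 t s hp] with τ hτ using hder_u τ s hτ
    rw [hev.deriv_eq]
    exact hder_u1 t s hp
  have hiter3 : iteratedDeriv 3 (fun t => u t s₀) 0 = u3 (0, s₀) := by
    rw [show (3:ℕ) = 2+1 from rfl, iteratedDeriv_succ]
    have hev2 : iteratedDeriv 2 (fun t => u t s₀) =ᶠ[𝓝 (0:ℝ)] fun t => u2 (t, s₀) := by
      filter_upwards [hWnhds1 0 s₀ hW0] with τ hτ using hiter2 τ s₀ hτ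
    rw [hev2.deriv_eq]
    exact hder_u2 0 s₀ hW0
  have hid_r1 : iteratedDeriv 2 (fun s => deriv (fun t => u t s) 0) s₀ = r1 (0, s₀) := by
    rw [show (2:ℕ) = 1+1 from rfl, iteratedDeriv_succ, iteratedDeriv_one]
    obtain ⟨O, hO, hOopen, hs₀O⟩ := eventually_nhds_iff.1 hWnhds2
    have hd1 : ∀ s ∈ O, deriv (fun s' => deriv (fun t => u t s') 0) s = q1 (0, s) := by
      intro s hs
      have hev : (fun s' => deriv (fun t => u t s') 0) =ᶠ[𝓝 s] fun s' => u1 (0, s') := by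
        filter_upwards [hOopen.mem_nhds hs] with y hy using hder_u 0 y (hO y hy)
      rw [hev.deriv_eq]
      exact hder_u1' 0 s (hO s hs)
    have hev2 : deriv (fun s' => deriv (fun t => u t s') 0) =ᶠ[𝓝 s₀] fun s => q1 (0, s) := by
      filter_upwards [hOopen.mem_nhds hs₀O] with s hs using hd1 s hs
    rw [hev2.deriv_eq]
    exact hder_q1' 0 s₀ hW0
  have hid_q2 : deriv (fun s => iteratedDeriv 2 (fun t => u t s) 0) s₀ = q2 (0, s₀) := by
    have hev : (fun s => iteratedDeriv 2 (fun t => u t s) 0) =ᶠ[𝓝 s₀] fun s => u2 (0, s) := by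
      filter_upwards [hWnhds2] with s hs using hiter2 0 s hs
    rw [hev.deriv_eq]
    exact hder_u2' 0 s₀ hW0
  have hid_T : iteratedDeriv 2 T s₀ = deriv (deriv T) s₀ := by
    rw [show (2:ℕ) = 1+1 from rfl, iteratedDeriv_succ, iteratedDeriv_one]
  have hsym : r2 (0, s₀) = q2 (0, s₀) :=
    fderiv_swap hWopen (hu1s.of_le (by norm_num)) hW0 ((0:ℝ),(1:ℝ)) ((1:ℝ),(0:ℝ))
  have hutt' : u2 (0, s₀) ≠ 0 := by
    rw [← hiter2 0 s₀ hW0]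
    exact hutt
  -- final algebra
  rw [hid_T, hiter2 0 s₀ hW0, hid_r1, hid_q2, hiter3]
  rw [hsym] at hE
  rw [show -(2 / u2 (0, s₀)) * (r1 (0, s₀) + q2 (0, s₀) * deriv T s₀
        + 1/3 * u3 (0, s₀) * deriv T s₀ ^ 2)
      = (-2 * (r1 (0, s₀) + q2 (0, s₀) * deriv T s₀
        + 1/3 * u3 (0, s₀) * deriv T s₀ ^ 2)) / u2 (0, s₀) from by ring,
    eq_div_iff hutt']
  linear_combination 2 * hE
end
end

section
/- Let (Xⁱ, Yⁱ, Zⁱ)(t) be the solution of the i-th smooth subsystem ẋ = f(x,y), ẏ = g(x,y) + gⁱ(0), ż = hⁱ(y,z,0) with initial condition (x₀, y₀, z₀) at t = 0, and let u(t) = H(Yⁱ(t), Zⁱ(t)) = (a+b)·Yⁱ(t) − a − b·Zⁱ(t). Then u(0) = 0, u'(0) = 0, and u''(0) = hⁱ·Dⁱ, where Dⁱ = b·g_y − (b²/(a+b))·hⁱ_y − b·hⁱ_z. -/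
open Filter Topology Asymptotics
open scoped ContDiff

noncomputable section

/-- The data of the piecewise-smooth system `ẋ = f(x,y)`, `ẏ = g(x,y) + gⁱ(ε)`,
`ż = hⁱ(y,z,ε)` with switching function `H(y,z) = (a+b)y − a − bz`, together with the
degenerate fold–fold point `(x₀,y₀,z₀)` on the switching plane. -/
structure SysData where
  a : ℝ
  b : ℝ
  f : ℝ → ℝ → ℝ
  g : ℝ → ℝ → ℝ
  gm : ℝ → ℝ
  gp : ℝ → ℝ
  hm : ℝ → ℝ → ℝ → ℝ
  hp : ℝ → ℝ → ℝ → ℝ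
  x₀ : ℝ
  y₀ : ℝ
  z₀ : ℝ
  hb : 0 < b
  hab : 0 < a + b
  smooth_f : ContDiff ℝ ∞ fun p : ℝ × ℝ => f p.1 p.2
  smooth_g : ContDiff ℝ ∞ fun p : ℝ × ℝ => g p.1 p.2
  smooth_gm : ContDiff ℝ ∞ gm
  smooth_gp : ContDiff ℝ ∞ gp
  smooth_hm : ContDiff ℝ ∞ fun p : ℝ × ℝ × ℝ => hm p.1 p.2.1 p.2.2
  smooth_hp : ContDiff ℝ ∞ fun p : ℝ × ℝ × ℝ => hp p.1 p.2.1 p.2.2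
  onL : (a + b) * y₀ - a - b * z₀ = 0
  border : f x₀ y₀ = 0
  foldm : (a + b) * (g x₀ y₀ + gm 0) - b * hm y₀ z₀ 0 = 0
  foldp : (a + b) * (g x₀ y₀ + gp 0) - b * hp y₀ z₀ 0 = 0

namespace SysData

variable (S : SysData)

/-- The switching function `H` on `ℝ³`. -/
def Hfun (p : ℝ × ℝ × ℝ) : ℝ := (S.a + S.b) * p.2.1 - S.a - S.b * p.2.2

/-- `ζ(z) = (a+bz)/(a+b)`, so that `(x, ζ(z), z)` lies on the switching plane. -/
def zeta (z : ℝ) : ℝ := (S.a + S.b * z) / (S.a + S.b)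

/-- `ζ'(0) = b/(a+b)`. -/
def zp0 : ℝ := S.b / (S.a + S.b)

def g0 : ℝ := S.g S.x₀ S.y₀
def gm0 : ℝ := S.gm 0
def gp0 : ℝ := S.gp 0
def hm0 : ℝ := S.hm S.y₀ S.z₀ 0
def hp0 : ℝ := S.hp S.y₀ S.z₀ 0

def fx : ℝ := deriv (fun x => S.f x S.y₀) S.x₀
def fy : ℝ := deriv (fun y => S.f S.x₀ y) S.y₀
def fyy : ℝ := iteratedDeriv 2 (fun y => S.f S.x₀ y) S.y₀
def gx : ℝ := deriv (fun x => S.g x S.y₀) S.x₀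
def gy : ℝ := deriv (fun y => S.g S.x₀ y) S.y₀
def gyy : ℝ := iteratedDeriv 2 (fun y => S.g S.x₀ y) S.y₀

def hmy : ℝ := deriv (fun y => S.hm y S.z₀ 0) S.y₀
def hmz : ℝ := deriv (fun z => S.hm S.y₀ z 0) S.z₀
def hme : ℝ := deriv (fun e => S.hm S.y₀ S.z₀ e) 0
def hmyy : ℝ := iteratedDeriv 2 (fun y => S.hm y S.z₀ 0) S.y₀
def hmzz : ℝ := iteratedDeriv 2 (fun z => S.hm S.y₀ z 0) S.z₀
def hmyz : ℝ := deriv (fun y => deriv (fun z => S.hm y z 0) S.z₀) S.y₀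
def hmzy : ℝ := deriv (fun z => deriv (fun y => S.hm y z 0) S.y₀) S.z₀

def hpy : ℝ := deriv (fun y => S.hp y S.z₀ 0) S.y₀
def hpz : ℝ := deriv (fun z => S.hp S.y₀ z 0) S.z₀
def hpe : ℝ := deriv (fun e => S.hp S.y₀ S.z₀ e) 0
def hpyy : ℝ := iteratedDeriv 2 (fun y => S.hp y S.z₀ 0) S.y₀
def hpzz : ℝ := iteratedDeriv 2 (fun z => S.hp S.y₀ z 0) S.z₀
def hpyz : ℝ := deriv (fun y => deriv (fun z => S.hp y z 0) S.z₀) S.y₀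
def hpzy : ℝ := deriv (fun z => deriv (fun y => S.hp y z 0) S.y₀) S.z₀

/-- `D⁻ = b·g_y − (b²/(a+b))·h⁻_y − b·h⁻_z`. -/
def Dm : ℝ := S.b * S.gy - S.b ^ 2 / (S.a + S.b) * S.hmy - S.b * S.hmz
/-- `D⁺ = b·g_y − (b²/(a+b))·h⁺_y − b·h⁺_z`. -/
def Dp : ℝ := S.b * S.gy - S.b ^ 2 / (S.a + S.b) * S.hpy - S.b * S.hpz

/-- `ᾱ⁻ = −2(a+b)g_x/D⁻`. -/
def albm : ℝ := -2 * ((S.a + S.b) * S.gx) / S.Dm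
def albp : ℝ := -2 * ((S.a + S.b) * S.gx) / S.Dp

/-- `γ̄⁻ = −2[(a+b)(g⁻)′(0) − b·h⁻_ε]/D⁻`. -/
def gbm : ℝ := -2 * ((S.a + S.b) * deriv S.gm 0 - S.b * S.hme) / S.Dm
def gbp : ℝ := -2 * ((S.a + S.b) * deriv S.gp 0 - S.b * S.hpe) / S.Dp

/-- `β⁻ = −2/h⁻`. -/
def betm : ℝ := -2 / S.hm0
def betp : ℝ := -2 / S.hp0

/-- `k̄̄⁻`. -/
def kbbm : ℝ :=
  (S.a + S.b) / 6 * (S.gx * S.fy + S.gyy * (S.g0 + S.gm0) + S.gy ^ 2)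
    - S.b / 6 * (S.hmyy + (S.a + S.b) / S.b * S.hmyz + (S.a + S.b) / S.b * S.hmzy
        + (S.a + S.b) ^ 2 / S.b ^ 2 * S.hmzz)
    - S.b / 6 * (S.hmy * S.gy + S.hmz * S.hmy + (S.a + S.b) / S.b * S.hmz ^ 2)
def kbbp : ℝ :=
  (S.a + S.b) / 6 * (S.gx * S.fy + S.gyy * (S.g0 + S.gp0) + S.gy ^ 2)
    - S.b / 6 * (S.hpyy + (S.a + S.b) / S.b * S.hpyz + (S.a + S.b) / S.b * S.hpzy
        + (S.a + S.b) ^ 2 / S.b ^ 2 * S.hpzz)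
    - S.b / 6 * (S.hpy * S.gy + S.hpz * S.hpy + (S.a + S.b) / S.b * S.hpz ^ 2)

/-- `k̃⁻`. -/
def ktilm : ℝ :=
  (S.a + S.b) / 2 * (S.gx * S.fy + S.gyy * (S.g0 + S.gm0) + S.gy ^ 2) * S.zp0
    - S.b / 2 * (S.hmyy + (S.a + S.b) / S.b * S.hmzy) * (S.g0 + S.gm0) * S.zp0
    - S.b / 2 * (S.hmy * S.gy + S.hmz * S.hmy) * S.zp0
    - S.b / 2 * (S.hmyz + (S.a + S.b) / S.b * S.hmzz) * (S.g0 + S.gm0)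
    - S.b / 2 * S.hmz ^ 2
def ktilp : ℝ :=
  (S.a + S.b) / 2 * (S.gx * S.fy + S.gyy * (S.g0 + S.gp0) + S.gy ^ 2) * S.zp0
    - S.b / 2 * (S.hpyy + (S.a + S.b) / S.b * S.hpzy) * (S.g0 + S.gp0) * S.zp0
    - S.b / 2 * (S.hpy * S.gy + S.hpz * S.hpy) * S.zp0
    - S.b / 2 * (S.hpyz + (S.a + S.b) / S.b * S.hpzz) * (S.g0 + S.gp0)
    - S.b / 2 * S.hpz ^ 2

/-- `k̂⁻`. -/
def khatm : ℝ :=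
  (S.a + S.b) / 2 * S.gyy * S.zp0 ^ 2
    - S.b * (1 / 2 * S.hmyy * S.zp0 ^ 2 + S.hmyz * S.zp0 + 1 / 2 * S.hmzz)
def khatp : ℝ :=
  (S.a + S.b) / 2 * S.gyy * S.zp0 ^ 2
    - S.b * (1 / 2 * S.hpyy * S.zp0 ^ 2 + S.hpyz * S.zp0 + 1 / 2 * S.hpzz)

/-- `η̄⁻`. -/
def etabm : ℝ :=
  -(4 / S.Dm) * (4 * S.b / (S.a + S.b) * S.kbbm / S.hm0 - 2 * S.ktilm / S.hm0 + S.khatm)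
def etabp : ℝ :=
  -(4 / S.Dp) * (4 * S.b / (S.a + S.b) * S.kbbp / S.hp0 - 2 * S.ktilp / S.hp0 + S.khatp)

/-- `A⁻ = f_x + ½f_y(g+g⁻₀)`. -/
def Am : ℝ := S.fx + 1 / 2 * S.fy * (S.g0 + S.gm0)
def Ap : ℝ := S.fx + 1 / 2 * S.fy * (S.g0 + S.gp0)

/-- `B⁻`. -/
def Bm : ℝ :=
  1 / 2 * S.fy * (S.b / (S.a + S.b)) * S.etabm
    + 4 * S.b / ((S.a + S.b) * S.hm0) *
        (1 / 6 * S.fx * S.gy + 1 / 6 * S.fyy * (S.g0 + S.gm0) + 1 / 6 * S.fy * S.gy)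
    - (S.fx * S.fy + S.fy * S.gy) * (S.b / ((S.a + S.b) * S.hm0))
    - 1 / 2 * S.fyy * S.b ^ 2 / (S.a + S.b) ^ 2
def Bp : ℝ :=
  1 / 2 * S.fy * (S.b / (S.a + S.b)) * S.etabp
    + 4 * S.b / ((S.a + S.b) * S.hp0) *
        (1 / 6 * S.fx * S.gy + 1 / 6 * S.fyy * (S.g0 + S.gp0) + 1 / 6 * S.fy * S.gy)
    - (S.fx * S.fy + S.fy * S.gy) * (S.b / ((S.a + S.b) * S.hp0))
    - 1 / 2 * S.fyy * S.b ^ 2 / (S.a + S.b) ^ 2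

/-- `C⁻ = ½f_y(b/(a+b))γ̄⁻`. -/
def Cm : ℝ := 1 / 2 * S.fy * (S.b / (S.a + S.b)) * S.gbm
def Cp : ℝ := 1 / 2 * S.fy * (S.b / (S.a + S.b)) * S.gbp

/-- `k = −(η̄⁻−η̄⁺)/(ᾱ⁻−ᾱ⁺)`. -/
def kcoef : ℝ := -(S.etabm - S.etabp) / (S.albm - S.albp)
/-- `m = −(γ̄⁻−γ̄⁺)/(ᾱ⁻−ᾱ⁺)`. -/
def mcoef : ℝ := -(S.gbm - S.gbp) / (S.albm - S.albp)

/-- `K = 2(kA⁺+B⁺)/h⁺ − 2(kA⁻+B⁻)/h⁻`. -/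
def Kc : ℝ := 2 * (S.kcoef * S.Ap + S.Bp) / S.hp0 - 2 * (S.kcoef * S.Am + S.Bm) / S.hm0
/-- `M = (mA⁻+C⁻)β⁻ − (mA⁺+C⁺)β⁺`. -/
def Mc : ℝ := (S.mcoef * S.Am + S.Cm) * S.betm - (S.mcoef * S.Ap + S.Cp) * S.betp

end SysData

/-- `(X,Y,Z)` is the (jointly smooth) general solution of the smooth subsystem
`ẋ = f(x,y)`, `ẏ = g(x,y) + gi(ε)`, `ż = hi(y,z,ε)` with initial condition
`(x̄,ȳ,z̄)` at `t = 0`. -/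
structure IsSol (S : SysData) (gi : ℝ → ℝ) (hi : ℝ → ℝ → ℝ → ℝ)
    (X Y Z : ℝ → ℝ → ℝ → ℝ → ℝ → ℝ) : Prop where
  init_x : ∀ x y z ε, X 0 x y z ε = x
  init_y : ∀ x y z ε, Y 0 x y z ε = y
  init_z : ∀ x y z ε, Z 0 x y z ε = z
  ode_x : ∀ t x y z ε,
    HasDerivAt (fun τ => X τ x y z ε) (S.f (X t x y z ε) (Y t x y z ε)) t
  ode_y : ∀ t x y z ε,
    HasDerivAt (fun τ => Y τ x y z ε) (S.g (X t x y z ε) (Y t x y z ε) + gi ε) t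
  ode_z : ∀ t x y z ε,
    HasDerivAt (fun τ => Z τ x y z ε) (hi (Y t x y z ε) (Z t x y z ε) ε) t
  smooth_X : ContDiff ℝ ∞ fun p : ℝ × ℝ × ℝ × ℝ × ℝ =>
    X p.1 p.2.1 p.2.2.1 p.2.2.2.1 p.2.2.2.2
  smooth_Y : ContDiff ℝ ∞ fun p : ℝ × ℝ × ℝ × ℝ × ℝ =>
    Y p.1 p.2.1 p.2.2.1 p.2.2.2.1 p.2.2.2.2
  smooth_Z : ContDiff ℝ ∞ fun p : ℝ × ℝ × ℝ × ℝ × ℝ =>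
    Z p.1 p.2.1 p.2.2.1 p.2.2.2.1 p.2.2.2.2

/-- `u(t,x,z,ε) = H(Y(t,x,ζ(z),z,ε), Z(t,x,ζ(z),z,ε))`. -/
def uFun (S : SysData) (Y Z : ℝ → ℝ → ℝ → ℝ → ℝ → ℝ) (t x z ε : ℝ) : ℝ :=
  (S.a + S.b) * Y t x (S.zeta z) z ε - S.a - S.b * Z t x (S.zeta z) z ε

/-- `v(t,x,z,ε) = ∫₀¹ ∂ₜu(σt,x,z,ε) dσ`, so that `u = t·v`; the nonzero root of `u(·,x,z,ε)`
near `0` is the root of `v(·,x,z,ε)`. -/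
def vFun (S : SysData) (Y Z : ℝ → ℝ → ℝ → ℝ → ℝ → ℝ) (t x z ε : ℝ) : ℝ :=
  ∫ σ in (0:ℝ)..1, deriv (fun τ => uFun S Y Z τ x z ε) (σ * t)

/-- `T` is the `C²` nontrivial return-time function: `T(x₀,z₀,0) = 0`, the point
`(X,Y,Z)(T(x,z,ε),x,ζ(z),z,ε)` lies on `L`, and `T(x,z,ε)` is the unique root near `0` of the
function `v` obtained from `u = H∘(Y,Z)` after factoring out the trivial root `t = 0`. -/
structure IsReturnTime (S : SysData) (Y Z : ℝ → ℝ → ℝ → ℝ → ℝ → ℝ)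
    (T : ℝ → ℝ → ℝ → ℝ) : Prop where
  base : T S.x₀ S.z₀ 0 = 0
  smooth : ∃ U ∈ 𝓝 ((S.x₀, S.z₀, (0:ℝ)) : ℝ × ℝ × ℝ),
    ContDiffOn ℝ 2 (fun p : ℝ × ℝ × ℝ => T p.1 p.2.1 p.2.2) U
  root : ∃ δ > (0:ℝ), ∃ U ∈ 𝓝 ((S.x₀, S.z₀, (0:ℝ)) : ℝ × ℝ × ℝ), ∀ p ∈ U,
    uFun S Y Z (T p.1 p.2.1 p.2.2) p.1 p.2.1 p.2.2 = 0 ∧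
    vFun S Y Z (T p.1 p.2.1 p.2.2) p.1 p.2.1 p.2.2 = 0 ∧
    |T p.1 p.2.1 p.2.2| < δ ∧
    ∀ t : ℝ, |t| < δ → vFun S Y Z t p.1 p.2.1 p.2.2 = 0 → t = T p.1 p.2.1 p.2.2

/-- The half-Poincaré map `(x,z) ↦ (X,Z)(T(x,z,ε), x, ζ(z), z, ε)` of the switching plane,
in the coordinates `(x,z)`. -/
def halfP (S : SysData) (X Z : ℝ → ℝ → ℝ → ℝ → ℝ → ℝ) (T : ℝ → ℝ → ℝ → ℝ)
    (ε : ℝ) (p : ℝ × ℝ) : ℝ × ℝ :=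
  (X (T p.1 p.2 ε) p.1 (S.zeta p.2) p.2 ε, Z (T p.1 p.2 ε) p.1 (S.zeta p.2) p.2 ε)

/-- The flow map of a subsystem on `ℝ³`. -/
def flow3 (X Y Z : ℝ → ℝ → ℝ → ℝ → ℝ → ℝ) (ε t : ℝ) (p : ℝ × ℝ × ℝ) : ℝ × ℝ × ℝ :=
  (X t p.1 p.2.1 p.2.2 ε, Y t p.1 p.2.1 p.2.2 ε, Z t p.1 p.2.1 p.2.2 ε)

theorem key_lemma (S : SysData) (gi : ℝ → ℝ) (hi : ℝ → ℝ → ℝ → ℝ)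
    (shi : ContDiff ℝ ∞ fun p : ℝ × ℝ × ℝ => hi p.1 p.2.1 p.2.2)
    (fold : (S.a + S.b) * (S.g S.x₀ S.y₀ + gi 0) - S.b * hi S.y₀ S.z₀ 0 = 0)
    (X Y Z : ℝ → ℝ → ℝ → ℝ → ℝ → ℝ) (hSol : IsSol S gi hi X Y Z) :
    (S.a + S.b) * Y 0 S.x₀ S.y₀ S.z₀ 0 - S.a - S.b * Z 0 S.x₀ S.y₀ S.z₀ 0 = 0 ∧
    deriv (fun t => (S.a + S.b) * Y t S.x₀ S.y₀ S.z₀ 0 - S.a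
      - S.b * Z t S.x₀ S.y₀ S.z₀ 0) 0 = 0 ∧
    iteratedDeriv 2 (fun t => (S.a + S.b) * Y t S.x₀ S.y₀ S.z₀ 0 - S.a
      - S.b * Z t S.x₀ S.y₀ S.z₀ 0) 0 =
      hi S.y₀ S.z₀ 0 * (S.b * S.gy - S.b ^ 2 / (S.a + S.b) *
        deriv (fun y => hi y S.z₀ 0) S.y₀ - S.b * deriv (fun z => hi S.y₀ z 0) S.z₀) := by
  set a := S.a
  set b := S.b
  set x₀ := S.x₀
  set y₀ := S.y₀
  set z₀ := S.z₀
  have hne : a + b ≠ 0 := ne_of_gt S.hab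
  have hX0 := hSol.init_x x₀ y₀ z₀ 0
  have hY0 := hSol.init_y x₀ y₀ z₀ 0
  have hZ0 := hSol.init_z x₀ y₀ z₀ 0
  -- derivatives of the system at each time
  have hasu : ∀ t, HasDerivAt
      (fun t => (a + b) * Y t x₀ y₀ z₀ 0 - a - b * Z t x₀ y₀ z₀ 0)
      ((a + b) * (S.g (X t x₀ y₀ z₀ 0) (Y t x₀ y₀ z₀ 0) + gi 0)
        - b * hi (Y t x₀ y₀ z₀ 0) (Z t x₀ y₀ z₀ 0) 0) t := by
    intro t
    exact (((hSol.ode_y t x₀ y₀ z₀ 0).const_mul (a + b)).sub_const a).sub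
      ((hSol.ode_z t x₀ y₀ z₀ 0).const_mul b)
  refine ⟨?_, ?_, ?_⟩
  · rw [hY0, hZ0]; exact S.onL
  · rw [(hasu 0).deriv, hX0, hY0, hZ0]; exact fold
  · -- second derivative
    rw [iteratedDeriv_succ, iteratedDeriv_one]
    have hderivu : (deriv fun t => (a + b) * Y t x₀ y₀ z₀ 0 - a - b * Z t x₀ y₀ z₀ 0)
        = fun t => (a + b) * (S.g (X t x₀ y₀ z₀ 0) (Y t x₀ y₀ z₀ 0) + gi 0)
          - b * hi (Y t x₀ y₀ z₀ 0) (Z t x₀ y₀ z₀ 0) 0 := by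
      funext t; exact (hasu t).deriv
    rw [hderivu]
    -- derivatives of the coordinates at 0
    have hX : HasDerivAt (fun t => X t x₀ y₀ z₀ 0) 0 0 := by
      have := hSol.ode_x 0 x₀ y₀ z₀ 0
      rwa [hX0, hY0, S.border] at this
    set yv : ℝ := S.g x₀ y₀ + gi 0 with hyvdef
    have hY : HasDerivAt (fun t => Y t x₀ y₀ z₀ 0) yv 0 := by
      have := hSol.ode_y 0 x₀ y₀ z₀ 0
      rwa [hX0, hY0] at this
    set hv : ℝ := hi y₀ z₀ 0 with hhvdef
    have hZ : HasDerivAt (fun t => Z t x₀ y₀ z₀ 0) hv 0 := by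
      have := hSol.ode_z 0 x₀ y₀ z₀ 0
      rwa [hY0, hZ0] at this
    -- fderiv of g
    set Lg := fderiv ℝ (fun p : ℝ × ℝ => S.g p.1 p.2) (x₀, y₀) with hLg
    have hgd : HasFDerivAt (fun p : ℝ × ℝ => S.g p.1 p.2) Lg (x₀, y₀) :=
      (S.smooth_g.differentiable (by simp) (x₀, y₀)).hasFDerivAt
    set Lh := fderiv ℝ (fun p : ℝ × ℝ × ℝ => hi p.1 p.2.1 p.2.2) (y₀, z₀, 0) with hLh
    have hhd : HasFDerivAt (fun p : ℝ × ℝ × ℝ => hi p.1 p.2.1 p.2.2) Lh (y₀, z₀, 0) :=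
      (shi.differentiable (by simp) (y₀, z₀, 0)).hasFDerivAt
    -- identify the partial derivatives
    have hgy : S.gy = Lg (0, 1) := by
      have : HasDerivAt (fun y => S.g x₀ y) (Lg (0, 1)) y₀ :=
        hgd.comp_hasDerivAt y₀ ((hasDerivAt_const y₀ x₀).prodMk (hasDerivAt_id y₀))
      exact this.deriv
    have hhy : deriv (fun y => hi y z₀ 0) y₀ = Lh (1, 0, 0) := by
      have : HasDerivAt (fun y => hi y z₀ 0) (Lh (1, 0, 0)) y₀ :=
        hhd.comp_hasDerivAt (f := fun y : ℝ => (y, z₀, (0:ℝ))) y₀ ((hasDerivAt_id' y₀).prodMk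
          ((hasDerivAt_const y₀ z₀).prodMk (hasDerivAt_const y₀ (0:ℝ))))
      exact this.deriv
    have hhz : deriv (fun z => hi y₀ z 0) z₀ = Lh (0, 1, 0) := by
      have : HasDerivAt (fun z => hi y₀ z 0) (Lh (0, 1, 0)) z₀ :=
        hhd.comp_hasDerivAt (f := fun z : ℝ => (y₀, z, (0:ℝ))) z₀ ((hasDerivAt_const z₀ y₀).prodMk
          ((hasDerivAt_id' z₀).prodMk (hasDerivAt_const z₀ (0:ℝ))))
      exact this.deriv
    -- derivative of the composites
    have hgc : HasDerivAt (fun t => S.g (X t x₀ y₀ z₀ 0) (Y t x₀ y₀ z₀ 0))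
        (Lg (0, yv)) 0 := by
      have hc : HasDerivAt (fun t => ((X t x₀ y₀ z₀ 0 : ℝ), (Y t x₀ y₀ z₀ 0 : ℝ)))
          ((0 : ℝ), yv) 0 := hX.prodMk hY
      have hgd' : HasFDerivAt (fun p : ℝ × ℝ => S.g p.1 p.2) Lg
          (X 0 x₀ y₀ z₀ 0, Y 0 x₀ y₀ z₀ 0) := by rw [hX0, hY0]; exact hgd
      exact hgd'.comp_hasDerivAt 0 hc
    have hhc : HasDerivAt (fun t => hi (Y t x₀ y₀ z₀ 0) (Z t x₀ y₀ z₀ 0) 0)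
        (Lh (yv, hv, 0)) 0 := by
      have hc : HasDerivAt
          (fun t => ((Y t x₀ y₀ z₀ 0 : ℝ), (Z t x₀ y₀ z₀ 0 : ℝ), (0 : ℝ)))
          (yv, hv, (0:ℝ)) 0 := hY.prodMk (hZ.prodMk (hasDerivAt_const 0 (0:ℝ)))
      have hhd' : HasFDerivAt (fun p : ℝ × ℝ × ℝ => hi p.1 p.2.1 p.2.2) Lh
          (Y 0 x₀ y₀ z₀ 0, Z 0 x₀ y₀ z₀ 0, 0) := by rw [hY0, hZ0]; exact hhd
      exact hhd'.comp_hasDerivAt 0 hc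
    have hw : HasDerivAt (fun t =>
        (a + b) * (S.g (X t x₀ y₀ z₀ 0) (Y t x₀ y₀ z₀ 0) + gi 0)
          - b * hi (Y t x₀ y₀ z₀ 0) (Z t x₀ y₀ z₀ 0) 0)
        ((a + b) * Lg (0, yv) - b * Lh (yv, hv, 0)) 0 :=
      ((hgc.add_const (gi 0)).const_mul (a + b)).sub (hhc.const_mul b)
    rw [hw.deriv]
    -- linearity of the fderivs
    have e1 : Lg (0, yv) = yv * Lg (0, 1) := by
      have : ((0 : ℝ), yv) = yv • ((0 : ℝ), (1 : ℝ)) := by simp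
      rw [this, Lg.map_smul]; simp [smul_eq_mul]
    have e2 : Lh (yv, hv, 0) = yv * Lh (1, 0, 0) + hv * Lh (0, 1, 0) := by
      have : ((yv : ℝ), (hv : ℝ), (0 : ℝ))
          = yv • ((1:ℝ), (0:ℝ), (0:ℝ)) + hv • ((0:ℝ), (1:ℝ), (0:ℝ)) := by
        simp [Prod.ext_iff]
      rw [this, Lh.map_add, Lh.map_smul, Lh.map_smul]; simp [smul_eq_mul]
    rw [e1, e2, ← hgy, ← hhy, ← hhz]
    have hyv : (a + b) * yv = b * hv := by
      have := fold; linarith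
    field_simp
    linear_combination ((a + b) * S.gy - b * deriv (fun y => hi y z₀ 0) y₀) * hyv

/-- along each subsystem's solution starting at the degenerate fold–fold point
`(x₀,y₀,z₀)` with `ε = 0`, the function `u(t) = H(Yⁱ(t), Zⁱ(t))` satisfies `u(0) = 0`,
`u'(0) = 0` and `u''(0) = hⁱ·Dⁱ`. -/
theorem stmt2 (S : SysData) (Xm Ym Zm Xp Yp Zp : ℝ → ℝ → ℝ → ℝ → ℝ → ℝ)
    (hSolm : IsSol S S.gm S.hm Xm Ym Zm) (hSolp : IsSol S S.gp S.hp Xp Yp Zp) :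
    ((S.a + S.b) * Ym 0 S.x₀ S.y₀ S.z₀ 0 - S.a - S.b * Zm 0 S.x₀ S.y₀ S.z₀ 0 = 0 ∧
      deriv (fun t => (S.a + S.b) * Ym t S.x₀ S.y₀ S.z₀ 0 - S.a
        - S.b * Zm t S.x₀ S.y₀ S.z₀ 0) 0 = 0 ∧
      iteratedDeriv 2 (fun t => (S.a + S.b) * Ym t S.x₀ S.y₀ S.z₀ 0 - S.a
        - S.b * Zm t S.x₀ S.y₀ S.z₀ 0) 0 = S.hm0 * S.Dm) ∧
    ((S.a + S.b) * Yp 0 S.x₀ S.y₀ S.z₀ 0 - S.a - S.b * Zp 0 S.x₀ S.y₀ S.z₀ 0 = 0 ∧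
      deriv (fun t => (S.a + S.b) * Yp t S.x₀ S.y₀ S.z₀ 0 - S.a
        - S.b * Zp t S.x₀ S.y₀ S.z₀ 0) 0 = 0 ∧
      iteratedDeriv 2 (fun t => (S.a + S.b) * Yp t S.x₀ S.y₀ S.z₀ 0 - S.a
        - S.b * Zp t S.x₀ S.y₀ S.z₀ 0) 0 = S.hp0 * S.Dp) :=
  ⟨key_lemma S S.gm S.hm S.smooth_hm S.foldm Xm Ym Zm hSolm,
   key_lemma S S.gp S.hp S.smooth_hp S.foldp Xp Yp Zp hSolp⟩
end
end

section
/- For each i ∈ {−,+}, assume hⁱ ≠ 0 and Dⁱ ≠ 0, where Dⁱ = b·g_y − (b²/(a+b))·hⁱ_y − b·hⁱ_z. Then there is a unique C² nontrivial return-time function Tⁱ_ε(x,z) defined on a neighborhood of (x₀, z₀, 0) (in the variables (x,z,ε)) with Tⁱ₀(x₀,z₀) = 0, such that H(Yⁱ(Tⁱ_ε(x,z), x, ζ(z), z, ε), Zⁱ(Tⁱ_ε(x,z), x, ζ(z), z, ε)) = 0 and Tⁱ_ε(x,z) is the nonzero root near t = 0 of this equation (obtained after factoring out the trivial root t = 0);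 moreover its first-order partial derivatives at (x₀, z₀, 0) are ∂ₓTⁱ = ᾱⁱ/hⁱ, ∂_zTⁱ = βⁱ = −2/hⁱ, and ∂_εTⁱ = γ̄ⁱ/hⁱ, where ᾱⁱ = −2(a+b)g_x/Dⁱ and γ̄ⁱ = −2[(a+b)(gⁱ)′(0) − b·hⁱ_ε]/Dⁱ. -/
open Filter Topology Asymptotics
open scoped ContDiff

noncomputable section

/-- The conclusion of STATEMENT 3 for one subsystem: existence and uniqueness of the `C²`
nontrivial return-time function, together with its first-order partial derivatives at
`(x₀, z₀, 0)`: `∂ₓT = ᾱ/h`, `∂_zT = β = −2/h`, `∂_εT = γ̄/h`. -/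
def ReturnTimeConcl (S : SysData) (Y Z : ℝ → ℝ → ℝ → ℝ → ℝ → ℝ) (h0 alb gb : ℝ) : Prop :=
  ∃ δ > (0:ℝ), ∃ U ∈ 𝓝 ((S.x₀, S.z₀, (0:ℝ)) : ℝ × ℝ × ℝ), ∃ T : ℝ → ℝ → ℝ → ℝ,
    ContDiffOn ℝ 2 (fun p : ℝ × ℝ × ℝ => T p.1 p.2.1 p.2.2) U ∧
    T S.x₀ S.z₀ 0 = 0 ∧
    (∀ p ∈ U,
      uFun S Y Z (T p.1 p.2.1 p.2.2) p.1 p.2.1 p.2.2 = 0 ∧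
      vFun S Y Z (T p.1 p.2.1 p.2.2) p.1 p.2.1 p.2.2 = 0 ∧
      |T p.1 p.2.1 p.2.2| < δ ∧
      (∀ t : ℝ, |t| < δ → vFun S Y Z t p.1 p.2.1 p.2.2 = 0 → t = T p.1 p.2.1 p.2.2)) ∧
    (∀ T' : ℝ → ℝ → ℝ → ℝ,
      (∀ p ∈ U, |T' p.1 p.2.1 p.2.2| < δ ∧
        vFun S Y Z (T' p.1 p.2.1 p.2.2) p.1 p.2.1 p.2.2 = 0) →
      ∀ p ∈ U, T' p.1 p.2.1 p.2.2 = T p.1 p.2.1 p.2.2) ∧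
    deriv (fun x => T x S.z₀ 0) S.x₀ = alb / h0 ∧
    deriv (fun z => T S.x₀ z 0) S.z₀ = -2 / h0 ∧
    deriv (fun e => T S.x₀ S.z₀ e) 0 = gb / h0





namespace PIHelper

abbrev Q3 : Type := ℝ × ℝ × ℝ

lemma one_le_inf : (1 : WithTop ℕ∞) ≤ ∞ := by exact_mod_cast le_top

lemma inf_ne_zero_wt : (∞ : WithTop ℕ∞) ≠ 0 := by simp

/-- the affine map `(s,w) ↦ (0, σ s, w)` -/
def LL (σ : ℝ) : ℝ × Q3 →L[ℝ] ℝ × ℝ × Q3 :=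
  (0 : ℝ × Q3 →L[ℝ] ℝ).prod ((σ • ContinuousLinearMap.fst ℝ ℝ Q3).prod
    (ContinuousLinearMap.snd ℝ ℝ Q3))

lemma LL_apply (σ : ℝ) (w : ℝ × Q3) : LL σ w = (0, σ * w.1, w.2) := rfl

lemma hasFDerivAt_m (σ : ℝ) (q : ℝ × Q3) :
    HasFDerivAt (fun w : ℝ × Q3 => ((σ, σ * w.1, w.2) : ℝ × ℝ × Q3)) (LL σ) q := by
  apply HasFDerivAt.prodMk
  · exact hasFDerivAt_const _ _
  · exact ((hasFDerivAt_fst (E := ℝ) (F := Q3) (p := q)).const_smul σ).prodMk hasFDerivAt_snd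

lemma norm_LL_le (σ : ℝ) (hσ : |σ| ≤ 1) : ‖LL σ‖ ≤ 1 := by
  apply ContinuousLinearMap.opNorm_le_bound _ zero_le_one
  intro w
  rw [LL_apply]
  simp only [Prod.norm_def, Real.norm_eq_abs, norm_zero, one_mul]
  apply max_le (by positivity)
  apply max_le
  · rw [abs_mul]
    calc |σ| * |w.1| ≤ 1 * |w.1| := mul_le_mul_of_nonneg_right hσ (abs_nonneg _)
    _ = |w.1| := one_mul _
    _ ≤ max |w.1| ‖w.2‖ := le_max_left _ _
  · exact le_max_right _ _

lemma LL_eq (σ : ℝ) : LL σ =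
    ((0 : ℝ × Q3 →L[ℝ] ℝ).prod ((0 : ℝ × Q3 →L[ℝ] ℝ).prod (ContinuousLinearMap.snd ℝ ℝ Q3)))
    + σ • ((0 : ℝ × Q3 →L[ℝ] ℝ).prod ((ContinuousLinearMap.fst ℝ ℝ Q3).prod
        (0 : ℝ × Q3 →L[ℝ] Q3))) := by
  ext v <;> simp [LL_apply]

lemma continuous_LL : Continuous fun σ : ℝ => LL σ := by
  simp only [LL_eq]
  exact continuous_const.add (continuous_id.smul continuous_const)

variable {Y : Type} [NormedAddCommGroup Y] [NormedSpace ℝ Y] [CompleteSpace Y]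

set_option synthInstance.maxHeartbeats 1000000 in
lemma hasFDerivAt_paramInt {G : ℝ × ℝ × Q3 → Y} (hG : ContDiff ℝ ∞ G) (q₀ : ℝ × Q3) :
    HasFDerivAt (fun q : ℝ × Q3 => ∫ σ in (0:ℝ)..1, G (σ, σ * q.1, q.2))
      (∫ σ in (0:ℝ)..1, (fderiv ℝ G (σ, σ * q₀.1, q₀.2)).comp (LL σ)) q₀ := by
  have hfc : Continuous (fun w => fderiv ℝ G w) := hG.continuous_fderiv inf_ne_zero_wt
  have hmc : Continuous (fun p : ℝ × (ℝ × Q3) => ((p.1, p.1 * p.2.1, p.2.2) : ℝ × ℝ × Q3)) := by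
    fun_prop
  obtain ⟨C, hC⟩ : ∃ C, ∀ w ∈ (fun p : ℝ × (ℝ × Q3) => ((p.1, p.1 * p.2.1, p.2.2) : ℝ × ℝ × Q3)) ''
      (Set.Icc (-1) 1 ×ˢ Metric.closedBall q₀ 1), ‖fderiv ℝ G w‖ ≤ C := by
    have hK : IsCompact ((fun p : ℝ × (ℝ × Q3) => ((p.1, p.1 * p.2.1, p.2.2) : ℝ × ℝ × Q3)) ''
        (Set.Icc (-1) 1 ×ˢ Metric.closedBall q₀ 1)) :=
      ((isCompact_Icc).prod (isCompact_closedBall _ _)).image hmc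
    exact hK.exists_bound_of_continuousOn hfc.continuousOn
  have hCpos : 0 ≤ C :=
    le_trans (norm_nonneg _) (hC (0, 0 * q₀.1, q₀.2) ⟨(0, q₀), ⟨by norm_num, by simp⟩, rfl⟩)
  exact intervalIntegral.hasFDerivAt_integral_of_dominated_of_fderiv_le
    (F := fun (q : ℝ × Q3) (σ : ℝ) => G (σ, σ * q.1, q.2))
    (F' := fun (q : ℝ × Q3) (σ : ℝ) => (fderiv ℝ G (σ, σ * q.1, q.2)).comp (LL σ))
    (bound := fun _ => C)
    (Metric.ball_mem_nhds q₀ one_pos)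
    (Filter.Eventually.of_forall fun q =>
      ((hG.continuous.comp (by fun_prop)).aestronglyMeasurable))
    ((hG.continuous.comp (by fun_prop)).intervalIntegrable _ _)
    (((hfc.comp (by fun_prop)).clm_comp continuous_LL).aestronglyMeasurable)
    (Filter.Eventually.of_forall fun σ hσ => by
      intro q hq
      have hσ1 : |σ| ≤ 1 := by
        rw [Set.uIoc_of_le (by norm_num : (0:ℝ) ≤ 1)] at hσ
        rw [abs_le]; exact ⟨by linarith [hσ.1], hσ.2⟩
      calc ‖(fderiv ℝ G (σ, σ * q.1, q.2)).comp (LL σ)‖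
          ≤ ‖fderiv ℝ G (σ, σ * q.1, q.2)‖ * ‖LL σ‖ := ContinuousLinearMap.opNorm_comp_le _ _
        _ ≤ C * 1 := by
            apply mul_le_mul _ (norm_LL_le σ hσ1) (norm_nonneg _) hCpos
            apply hC
            exact ⟨(σ, q), ⟨abs_le.mp hσ1, Metric.ball_subset_closedBall hq⟩, rfl⟩
        _ = C := mul_one C)
    intervalIntegrable_const
    (Filter.Eventually.of_forall fun σ _ => fun q _ =>
      (hG.differentiable inf_ne_zero_wt _).hasFDerivAt.comp q (hasFDerivAt_m σ q))

lemma contDiff_paramInt : ∀ (n : ℕ) (Y : Type) (_ : NormedAddCommGroup Y)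
    (_ : NormedSpace ℝ Y) (_ : CompleteSpace Y) (G : ℝ × ℝ × Q3 → Y),
    ContDiff ℝ ∞ G →
    ContDiff ℝ n (fun q : ℝ × Q3 => ∫ σ in (0:ℝ)..1, G (σ, σ * q.1, q.2)) := by
  intro n
  induction n with
  | zero =>
    intro Y _ _ _ G hG
    rw [show ((0:ℕ) : WithTop ℕ∞) = 0 by rfl, contDiff_zero]
    exact Differentiable.continuous fun q => (hasFDerivAt_paramInt hG q).differentiableAt
  | succ k ih =>
    intro Y _ _ _ G hG
    rw [show ((k+1:ℕ) : WithTop ℕ∞) = (k : WithTop ℕ∞) + 1 by push_cast; ring,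
      contDiff_succ_iff_fderiv]
    refine ⟨fun q => (hasFDerivAt_paramInt hG q).differentiableAt, by simp, ?_⟩
    have hfe : (fderiv ℝ (fun q : ℝ × Q3 => ∫ σ in (0:ℝ)..1, G (σ, σ * q.1, q.2)))
        = fun q : ℝ × Q3 => ∫ σ in (0:ℝ)..1,
            ((fun w : ℝ × ℝ × Q3 => (fderiv ℝ G w).comp (LL w.1)) (σ, σ * q.1, q.2)) := by
      funext q
      exact (hasFDerivAt_paramInt hG q).fderiv
    rw [hfe]
    refine ih (ℝ × Q3 →L[ℝ] Y) inferInstance inferInstance inferInstance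
      (fun w : ℝ × ℝ × Q3 => (fderiv ℝ G w).comp (LL w.1)) ?_
    apply ContDiff.clm_comp
    · exact (hG.fderiv_right (m := ∞) (by exact_mod_cast le_top))
    · have : (fun w : ℝ × ℝ × Q3 => LL w.1) = fun w : ℝ × ℝ × Q3 =>
          ((0 : ℝ × Q3 →L[ℝ] ℝ).prod ((0 : ℝ × Q3 →L[ℝ] ℝ).prod (ContinuousLinearMap.snd ℝ ℝ Q3)))
          + w.1 • ((0 : ℝ × Q3 →L[ℝ] ℝ).prod ((ContinuousLinearMap.fst ℝ ℝ Q3).prod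
              (0 : ℝ × Q3 →L[ℝ] Q3))) := by
        funext w; exact LL_eq w.1
      rw [this]
      exact contDiff_const.add (contDiff_fst.smul contDiff_const)


lemma fd_t {α : Type*} [NormedAddCommGroup α] [NormedSpace ℝ α] {F : ℝ × α → ℝ} {t : ℝ} {q : α}
    (hF : DifferentiableAt ℝ F (t, q)) :
    HasDerivAt (fun s => F (s, q)) (fderiv ℝ F (t, q) (1, 0)) t :=
  hF.hasFDerivAt.comp_hasDerivAt t ((hasDerivAt_id t).prodMk (hasDerivAt_const t q))

lemma fd3_1 {F : Q3 → ℝ} {y0 z0 e0 : ℝ} (hF : DifferentiableAt ℝ F (y0, z0, e0)) :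
    HasDerivAt (fun y => F (y, z0, e0)) (fderiv ℝ F (y0, z0, e0) (1, 0, 0)) y0 :=
  hF.hasFDerivAt.comp_hasDerivAt y0 ((hasDerivAt_id y0).prodMk (hasDerivAt_const y0 (z0, e0)))

lemma fd3_2 {F : Q3 → ℝ} {y0 z0 e0 : ℝ} (hF : DifferentiableAt ℝ F (y0, z0, e0)) :
    HasDerivAt (fun z => F (y0, z, e0)) (fderiv ℝ F (y0, z0, e0) (0, 1, 0)) z0 :=
  hF.hasFDerivAt.comp_hasDerivAt z0
    ((hasDerivAt_const z0 y0).prodMk ((hasDerivAt_id z0).prodMk (hasDerivAt_const z0 e0)))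

lemma fd3_3 {F : Q3 → ℝ} {y0 z0 e0 : ℝ} (hF : DifferentiableAt ℝ F (y0, z0, e0)) :
    HasDerivAt (fun e => F (y0, z0, e)) (fderiv ℝ F (y0, z0, e0) (0, 0, 1)) e0 :=
  hF.hasFDerivAt.comp_hasDerivAt e0
    ((hasDerivAt_const e0 y0).prodMk ((hasDerivAt_const e0 z0).prodMk (hasDerivAt_id e0)))

lemma fd2_1 {F : ℝ × ℝ → ℝ} {x0 y0 : ℝ} (hF : DifferentiableAt ℝ F (x0, y0)) :
    HasDerivAt (fun x => F (x, y0)) (fderiv ℝ F (x0, y0) (1, 0)) x0 :=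
  hF.hasFDerivAt.comp_hasDerivAt x0 ((hasDerivAt_id x0).prodMk (hasDerivAt_const x0 y0))

lemma fd2_2 {F : ℝ × ℝ → ℝ} {x0 y0 : ℝ} (hF : DifferentiableAt ℝ F (x0, y0)) :
    HasDerivAt (fun y => F (x0, y)) (fderiv ℝ F (x0, y0) (0, 1)) y0 :=
  hF.hasFDerivAt.comp_hasDerivAt y0 ((hasDerivAt_const y0 x0).prodMk (hasDerivAt_id y0))



end PIHelper

namespace PIHelper

open MeasureTheory intervalIntegral

def Ufun (S : SysData) (Y Z : ℝ → ℝ → ℝ → ℝ → ℝ → ℝ) : ℝ × Q3 → ℝ :=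
  fun w => uFun S Y Z w.1 w.2.1 w.2.2.1 w.2.2.2

def wt (S : SysData) (Y Z : ℝ → ℝ → ℝ → ℝ → ℝ → ℝ) : ℝ × Q3 → ℝ :=
  fun w => fderiv ℝ (Ufun S Y Z) w (1, 0)

def vF (S : SysData) (Y Z : ℝ → ℝ → ℝ → ℝ → ℝ → ℝ) : ℝ × Q3 → ℝ :=
  fun w => ∫ σ in (0:ℝ)..1, wt S Y Z (σ * w.1, w.2)

section SysLemmas

variable (S : SysData) {gi : ℝ → ℝ} {hi : ℝ → ℝ → ℝ → ℝ}
  {X Y Z : ℝ → ℝ → ℝ → ℝ → ℝ → ℝ}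

lemma smooth_zeta : ContDiff ℝ ∞ S.zeta := by
  unfold SysData.zeta
  exact (contDiff_const.add (contDiff_const.mul contDiff_id)).div_const _

lemma smoothU (hSol : IsSol S gi hi X Y Z) : ContDiff ℝ ∞ (Ufun S Y Z) := by
  have hm : ContDiff ℝ ∞ (fun w : ℝ × Q3 =>
      ((w.1, w.2.1, S.zeta w.2.2.1, w.2.2.1, w.2.2.2) : ℝ × ℝ × ℝ × ℝ × ℝ)) := by
    refine contDiff_fst.prodMk ?_
    refine (contDiff_fst.comp contDiff_snd).prodMk ?_
    refine ((smooth_zeta S).comp (contDiff_fst.comp (contDiff_snd.comp contDiff_snd))).prodMk ?_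
    exact (contDiff_fst.comp (contDiff_snd.comp contDiff_snd)).prodMk
      (contDiff_snd.comp (contDiff_snd.comp contDiff_snd))
  exact ((contDiff_const.mul (hSol.smooth_Y.comp hm)).sub contDiff_const).sub
    (contDiff_const.mul (hSol.smooth_Z.comp hm))

lemma smoothwt (hSol : IsSol S gi hi X Y Z) : ContDiff ℝ ∞ (wt S Y Z) :=
  ((smoothU S hSol).fderiv_right (m := ∞) (by exact_mod_cast le_top)).clm_apply contDiff_const

lemma hslice (hSol : IsSol S gi hi X Y Z) (s : ℝ) (q : Q3) :
    HasDerivAt (fun τ => Ufun S Y Z (τ, q)) (wt S Y Z (s, q)) s :=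
  fd_t (((smoothU S hSol).differentiable inf_ne_zero_wt) _)

lemma smoothvF (hSol : IsSol S gi hi X Y Z) (n : ℕ) : ContDiff ℝ n (vF S Y Z) :=
  contDiff_paramInt n ℝ inferInstance inferInstance inferInstance
    (fun w : ℝ × ℝ × Q3 => wt S Y Z w.2) ((smoothwt S hSol).comp contDiff_snd)

lemma hDvF (hSol : IsSol S gi hi X Y Z) (q : ℝ × Q3) :
    HasFDerivAt (vF S Y Z)
      (∫ σ in (0:ℝ)..1,
        (fderiv ℝ (fun w : ℝ × ℝ × Q3 => wt S Y Z w.2) (σ, σ * q.1, q.2)).comp (LL σ)) q :=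
  hasFDerivAt_paramInt ((smoothwt S hSol).comp contDiff_snd) q

lemma vF_eq (hSol : IsSol S gi hi X Y Z) (t x z ε : ℝ) :
    vFun S Y Z t x z ε = vF S Y Z (t, (x, z, ε)) := by
  unfold vFun vF
  congr 1
  funext σ
  exact (hslice S hSol (σ * t) (x, z, ε)).deriv

lemma u0 (hSol : IsSol S gi hi X Y Z) (q : Q3) : Ufun S Y Z (0, q) = 0 := by
  show uFun S Y Z 0 q.1 q.2.1 q.2.2 = 0
  unfold uFun
  rw [hSol.init_y, hSol.init_z]
  unfold SysData.zeta
  field_simp [ne_of_gt S.hab]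
  ring

lemma u_eq_t_mul_v (hSol : IsSol S gi hi X Y Z) (t x z ε : ℝ) :
    uFun S Y Z t x z ε = t * vFun S Y Z t x z ε := by
  rcases eq_or_ne t 0 with rfl | ht
  · rw [show uFun S Y Z 0 x z ε = 0 from u0 S hSol (x, z, ε), zero_mul]
  · rw [vF_eq S hSol]
    have h1 : vF S Y Z (t, (x, z, ε))
        = ∫ σ in (0:ℝ)..1, (fun s => wt S Y Z (s, (x, z, ε))) (σ * t) := rfl
    rw [h1, intervalIntegral.integral_comp_mul_right (fun s => wt S Y Z (s, (x, z, ε))) ht]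
    simp only [zero_mul, one_mul, smul_eq_mul]
    rw [intervalIntegral.integral_eq_sub_of_hasDerivAt
      (fun s _ => hslice S hSol s (x, z, ε))
      (((smoothwt S hSol).continuous.comp (by fun_prop)).intervalIntegrable _ _)]
    have h2 : Ufun S Y Z (0, (x, z, ε)) = 0 := u0 S hSol _
    have h3 : Ufun S Y Z (t, (x, z, ε)) = uFun S Y Z t x z ε := rfl
    rw [h2, h3, sub_zero]
    field_simp

end SysLemmas

set_option maxHeartbeats 2000000 in
theorem worker (S : SysData) (gi : ℝ → ℝ) (hi : ℝ → ℝ → ℝ → ℝ)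
    (X Y Z : ℝ → ℝ → ℝ → ℝ → ℝ → ℝ)
    (hgi : ContDiff ℝ ∞ gi)
    (hhi : ContDiff ℝ ∞ fun p : ℝ × ℝ × ℝ => hi p.1 p.2.1 p.2.2)
    (hSol : IsSol S gi hi X Y Z)
    (hfold : (S.a + S.b) * (S.g S.x₀ S.y₀ + gi 0) - S.b * hi S.y₀ S.z₀ 0 = 0)
    (h0 Dg : ℝ)
    (hh0 : h0 = hi S.y₀ S.z₀ 0)
    (hDg : Dg = S.b * S.gy - S.b ^ 2 / (S.a + S.b) * deriv (fun y => hi y S.z₀ 0) S.y₀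
        - S.b * deriv (fun z => hi S.y₀ z 0) S.z₀)
    (hh0ne : h0 ≠ 0) (hDne : Dg ≠ 0) :
    ReturnTimeConcl S Y Z h0 (-2 * ((S.a + S.b) * S.gx) / Dg)
      (-2 * ((S.a + S.b) * deriv gi 0 - S.b * deriv (fun e => hi S.y₀ S.z₀ e) 0) / Dg) := by
  have habne : S.a + S.b ≠ 0 := ne_of_gt S.hab
  have hg2d : Differentiable ℝ (fun p : ℝ × ℝ => S.g p.1 p.2) :=
    S.smooth_g.differentiable inf_ne_zero_wt
  have hhid : Differentiable ℝ (fun p : Q3 => hi p.1 p.2.1 p.2.2) :=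
    hhi.differentiable inf_ne_zero_wt
  have hζz₀ : S.zeta S.z₀ = S.y₀ := by
    unfold SysData.zeta
    field_simp
    linarith [S.onL]
  have hζd : ∀ z : ℝ, HasDerivAt S.zeta (S.b / (S.a + S.b)) z := by
    intro z
    have h := (((hasDerivAt_id z).const_mul S.b).const_add S.a).div_const (S.a + S.b)
    show HasDerivAt (fun x => (S.a + S.b * x) / (S.a + S.b)) _ z
    simpa using h
  -- slice derivatives
  have hgxd : DifferentiableAt ℝ (fun x => S.g x S.y₀) S.x₀ :=
    (hg2d (S.x₀, S.y₀)).comp (f := fun x : ℝ => (x, S.y₀)) S.x₀ (differentiableAt_id.prodMk (differentiableAt_const _))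
  have hgx : HasDerivAt (fun x => S.g x S.y₀) S.gx S.x₀ := hgxd.hasDerivAt
  have hgyd : DifferentiableAt ℝ (fun y => S.g S.x₀ y) S.y₀ :=
    (hg2d (S.x₀, S.y₀)).comp (f := fun y : ℝ => (S.x₀, y)) S.y₀ ((differentiableAt_const _).prodMk differentiableAt_id)
  have hgy : HasDerivAt (fun y => S.g S.x₀ y) S.gy S.y₀ := hgyd.hasDerivAt
  have hhiyd : DifferentiableAt ℝ (fun y => hi y S.z₀ 0) S.y₀ :=
    (hhid (S.y₀, S.z₀, 0)).comp (f := fun y : ℝ => ((y, S.z₀, (0:ℝ)) : Q3)) S.y₀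
      (differentiableAt_id.prodMk (differentiableAt_const ((S.z₀, (0:ℝ)) : ℝ × ℝ)))
  have hHy : HasDerivAt (fun y => hi y S.z₀ 0) (deriv (fun y => hi y S.z₀ 0) S.y₀) S.y₀ :=
    hhiyd.hasDerivAt
  have hhizd : DifferentiableAt ℝ (fun z => hi S.y₀ z 0) S.z₀ :=
    (hhid (S.y₀, S.z₀, 0)).comp (f := fun z : ℝ => ((S.y₀, z, (0:ℝ)) : Q3)) S.z₀
      ((differentiableAt_const _).prodMk (differentiableAt_id.prodMk (differentiableAt_const _)))
  have hHz : HasDerivAt (fun z => hi S.y₀ z 0) (deriv (fun z => hi S.y₀ z 0) S.z₀) S.z₀ :=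
    hhizd.hasDerivAt
  have hhied : DifferentiableAt ℝ (fun e => hi S.y₀ S.z₀ e) 0 :=
    (hhid (S.y₀, S.z₀, 0)).comp (f := fun e : ℝ => ((S.y₀, S.z₀, e) : Q3)) 0
      ((differentiableAt_const _).prodMk ((differentiableAt_const _).prodMk differentiableAt_id))
  have hHe : HasDerivAt (fun e => hi S.y₀ S.z₀ e) (deriv (fun e => hi S.y₀ S.z₀ e) 0) 0 :=
    hhied.hasDerivAt
  -- fderiv ↔ slice derivatives
  have hfdg2y : fderiv ℝ (fun p : ℝ × ℝ => S.g p.1 p.2) (S.x₀, S.y₀) (0, 1) = S.gy :=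
    (fd2_2 (hg2d _)).unique hgy
  have hfdhi1 : fderiv ℝ (fun p : Q3 => hi p.1 p.2.1 p.2.2) (S.y₀, S.z₀, 0) (1, 0, 0)
      = deriv (fun y => hi y S.z₀ 0) S.y₀ := (fd3_1 (hhid _)).unique hHy
  have hfdhi2 : fderiv ℝ (fun p : Q3 => hi p.1 p.2.1 p.2.2) (S.y₀, S.z₀, 0) (0, 1, 0)
      = deriv (fun z => hi S.y₀ z 0) S.z₀ := (fd3_2 (hhid _)).unique hHz
  -- v on the time-zero slice
  have v0eq : ∀ q : Q3, vF S Y Z (0, q)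
      = (S.a + S.b) * (S.g q.1 (S.zeta q.2.1) + gi q.2.2)
        - S.b * hi (S.zeta q.2.1) q.2.1 q.2.2 := by
    intro q
    have h1 : vF S Y Z (0, q) = wt S Y Z (0, q) := by
      unfold vF
      simp [mul_zero]
    rw [h1]
    have h2 := hslice S hSol 0 q
    have h3 : HasDerivAt (fun τ => Ufun S Y Z (τ, q))
        ((S.a + S.b) * (S.g (X 0 q.1 (S.zeta q.2.1) q.2.1 q.2.2)
            (Y 0 q.1 (S.zeta q.2.1) q.2.1 q.2.2) + gi q.2.2)
          - S.b * hi (Y 0 q.1 (S.zeta q.2.1) q.2.1 q.2.2)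
              (Z 0 q.1 (S.zeta q.2.1) q.2.1 q.2.2) q.2.2) 0 :=
      (((hSol.ode_y 0 q.1 (S.zeta q.2.1) q.2.1 q.2.2).const_mul (S.a + S.b)).sub_const S.a).sub
        ((hSol.ode_z 0 q.1 (S.zeta q.2.1) q.2.1 q.2.2).const_mul S.b)
    have h4 := h2.unique h3
    rw [h4, hSol.init_x, hSol.init_y, hSol.init_z]
  -- the flow from the base point
  have hX0 : X 0 S.x₀ S.y₀ S.z₀ 0 = S.x₀ := hSol.init_x _ _ _ _
  have hY0 : Y 0 S.x₀ S.y₀ S.z₀ 0 = S.y₀ := hSol.init_y _ _ _ _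
  have hZ0 : Z 0 S.x₀ S.y₀ S.z₀ 0 = S.z₀ := hSol.init_z _ _ _ _
  have hXd : HasDerivAt (fun s => X s S.x₀ S.y₀ S.z₀ 0) (S.f S.x₀ S.y₀) 0 := by
    have h := hSol.ode_x 0 S.x₀ S.y₀ S.z₀ 0
    rwa [hX0, hY0] at h
  have hYd : HasDerivAt (fun s => Y s S.x₀ S.y₀ S.z₀ 0) (S.g S.x₀ S.y₀ + gi 0) 0 := by
    have h := hSol.ode_y 0 S.x₀ S.y₀ S.z₀ 0
    rwa [hX0, hY0] at h
  have hZd : HasDerivAt (fun s => Z s S.x₀ S.y₀ S.z₀ 0) (hi S.y₀ S.z₀ 0) 0 := by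
    have h := hSol.ode_z 0 S.x₀ S.y₀ S.z₀ 0
    rwa [hY0, hZ0] at h
  have hgflow : HasDerivAt
      (fun s => S.g (X s S.x₀ S.y₀ S.z₀ 0) (Y s S.x₀ S.y₀ S.z₀ 0))
      ((S.g S.x₀ S.y₀ + gi 0) * S.gy) 0 := by
    have hc : HasDerivAt (fun s => ((X s S.x₀ S.y₀ S.z₀ 0, Y s S.x₀ S.y₀ S.z₀ 0) : ℝ × ℝ))
        ((S.f S.x₀ S.y₀, S.g S.x₀ S.y₀ + gi 0)) 0 := hXd.prodMk hYd
    have hF : HasFDerivAt (fun p : ℝ × ℝ => S.g p.1 p.2)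
        (fderiv ℝ (fun p : ℝ × ℝ => S.g p.1 p.2) (S.x₀, S.y₀))
        ((X 0 S.x₀ S.y₀ S.z₀ 0, Y 0 S.x₀ S.y₀ S.z₀ 0)) := by
      rw [hX0, hY0]; exact (hg2d _).hasFDerivAt
    have h := hF.comp_hasDerivAt 0 hc
    have hval : fderiv ℝ (fun p : ℝ × ℝ => S.g p.1 p.2) (S.x₀, S.y₀)
        (S.f S.x₀ S.y₀, S.g S.x₀ S.y₀ + gi 0) = (S.g S.x₀ S.y₀ + gi 0) * S.gy := by
      rw [S.border]
      have hv : ((0 : ℝ), S.g S.x₀ S.y₀ + gi 0)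
          = (S.g S.x₀ S.y₀ + gi 0) • ((0 : ℝ), (1 : ℝ)) := by simp
      rw [hv, ContinuousLinearMap.map_smul, hfdg2y, smul_eq_mul]
    rwa [hval] at h
  have hhiflow : HasDerivAt
      (fun s => hi (Y s S.x₀ S.y₀ S.z₀ 0) (Z s S.x₀ S.y₀ S.z₀ 0) 0)
      ((S.g S.x₀ S.y₀ + gi 0) * deriv (fun y => hi y S.z₀ 0) S.y₀
        + hi S.y₀ S.z₀ 0 * deriv (fun z => hi S.y₀ z 0) S.z₀) 0 := by
    have hc : HasDerivAt
        (fun s => ((Y s S.x₀ S.y₀ S.z₀ 0, Z s S.x₀ S.y₀ S.z₀ 0, (0:ℝ)) : Q3))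
        ((S.g S.x₀ S.y₀ + gi 0, hi S.y₀ S.z₀ 0, (0:ℝ))) 0 :=
      hYd.prodMk (hZd.prodMk (hasDerivAt_const _ _))
    have hF : HasFDerivAt (fun p : Q3 => hi p.1 p.2.1 p.2.2)
        (fderiv ℝ (fun p : Q3 => hi p.1 p.2.1 p.2.2) (S.y₀, S.z₀, 0))
        ((Y 0 S.x₀ S.y₀ S.z₀ 0, Z 0 S.x₀ S.y₀ S.z₀ 0, (0:ℝ))) := by
      rw [hY0, hZ0]; exact (hhid _).hasFDerivAt
    have h := hF.comp_hasDerivAt 0 hc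
    have hval : fderiv ℝ (fun p : Q3 => hi p.1 p.2.1 p.2.2) (S.y₀, S.z₀, 0)
        ((S.g S.x₀ S.y₀ + gi 0, hi S.y₀ S.z₀ 0, (0:ℝ)))
        = (S.g S.x₀ S.y₀ + gi 0) * deriv (fun y => hi y S.z₀ 0) S.y₀
          + hi S.y₀ S.z₀ 0 * deriv (fun z => hi S.y₀ z 0) S.z₀ := by
      have hv : ((S.g S.x₀ S.y₀ + gi 0, hi S.y₀ S.z₀ 0, (0:ℝ)) : Q3)
          = (S.g S.x₀ S.y₀ + gi 0) • ((1:ℝ), (0:ℝ), (0:ℝ))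
            + (hi S.y₀ S.z₀ 0) • ((0:ℝ), (1:ℝ), (0:ℝ)) := by
        simp [Prod.ext_iff]
      rw [hv, ContinuousLinearMap.map_add, ContinuousLinearMap.map_smul, ContinuousLinearMap.map_smul, hfdhi1, hfdhi2, smul_eq_mul, smul_eq_mul]
    rwa [hval] at h
  -- derivative of t ↦ wt(t, q₀) at 0
  have hUq₀fun : (fun τ => Ufun S Y Z (τ, ((S.x₀, S.z₀, 0) : Q3)))
      = fun τ => (S.a + S.b) * Y τ S.x₀ S.y₀ S.z₀ 0 - S.a - S.b * Z τ S.x₀ S.y₀ S.z₀ 0 := by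
    funext τ
    show uFun S Y Z τ S.x₀ S.z₀ 0 = _
    unfold uFun
    rw [hζz₀]
  have hwflow : ∀ s : ℝ, wt S Y Z (s, ((S.x₀, S.z₀, 0) : Q3))
      = (S.a + S.b) * (S.g (X s S.x₀ S.y₀ S.z₀ 0) (Y s S.x₀ S.y₀ S.z₀ 0) + gi 0)
        - S.b * hi (Y s S.x₀ S.y₀ S.z₀ 0) (Z s S.x₀ S.y₀ S.z₀ 0) 0 := by
    intro s
    have h1 := hslice S hSol s ((S.x₀, S.z₀, 0) : Q3)
    rw [hUq₀fun] at h1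
    have h2 : HasDerivAt
        (fun τ => (S.a + S.b) * Y τ S.x₀ S.y₀ S.z₀ 0 - S.a - S.b * Z τ S.x₀ S.y₀ S.z₀ 0)
        ((S.a + S.b) * (S.g (X s S.x₀ S.y₀ S.z₀ 0) (Y s S.x₀ S.y₀ S.z₀ 0) + gi 0)
          - S.b * hi (Y s S.x₀ S.y₀ S.z₀ 0) (Z s S.x₀ S.y₀ S.z₀ 0) 0) s :=
      (((hSol.ode_y s S.x₀ S.y₀ S.z₀ 0).const_mul (S.a + S.b)).sub_const S.a).sub
        ((hSol.ode_z s S.x₀ S.y₀ S.z₀ 0).const_mul S.b)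
    exact h1.unique h2
  have hutt : HasDerivAt (fun s => wt S Y Z (s, ((S.x₀, S.z₀, 0) : Q3)))
      ((S.a + S.b) * ((S.g S.x₀ S.y₀ + gi 0) * S.gy)
        - S.b * ((S.g S.x₀ S.y₀ + gi 0) * deriv (fun y => hi y S.z₀ 0) S.y₀
            + hi S.y₀ S.z₀ 0 * deriv (fun z => hi S.y₀ z 0) S.z₀)) 0 := by
    rw [funext hwflow]
    exact ((hgflow.add_const (gi 0)).const_mul (S.a + S.b)).sub (hhiflow.const_mul S.b)
  -- all the fderiv machinery at the base point
  have hwsm := smoothwt S hSol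
  have hv2 : ContDiff ℝ 2 (vF S Y Z) := by
    have h := smoothvF S hSol 2
    norm_num at h
    exact h
  have hDv2 : HasFDerivAt (vF S Y Z)
      (∫ σ in (0:ℝ)..1,
        (fderiv ℝ (fun w : ℝ × ℝ × Q3 => wt S Y Z w.2) (σ, 0, ((S.x₀, S.z₀, 0) : Q3))).comp
          (LL σ)) ((0:ℝ), ((S.x₀, S.z₀, 0) : Q3)) := by
    have h := hDvF S hSol ((0:ℝ), ((S.x₀, S.z₀, 0) : Q3))
    simpa using h
  set Dv : ℝ × Q3 →L[ℝ] ℝ :=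
    ∫ σ in (0:ℝ)..1,
      (fderiv ℝ (fun w : ℝ × ℝ × Q3 => wt S Y Z w.2) (σ, 0, ((S.x₀, S.z₀, 0) : Q3))).comp
        (LL σ) with hDvdef
  have hG3fd : ∀ σ : ℝ, fderiv ℝ (fun w : ℝ × ℝ × Q3 => wt S Y Z w.2)
      (σ, 0, ((S.x₀, S.z₀, 0) : Q3))
      = (fderiv ℝ (wt S Y Z) ((0:ℝ), ((S.x₀, S.z₀, 0) : Q3))).comp
          (ContinuousLinearMap.snd ℝ ℝ (ℝ × Q3)) := fun σ =>
    ((((hwsm.differentiable inf_ne_zero_wt) _).hasFDerivAt.comp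
      ((σ, 0, ((S.x₀, S.z₀, 0) : Q3)) : ℝ × ℝ × Q3) hasFDerivAt_snd)).fderiv
  have hfdwt_t : fderiv ℝ (wt S Y Z) ((0:ℝ), ((S.x₀, S.z₀, 0) : Q3)) ((1:ℝ), (0:Q3))
      = (S.a + S.b) * ((S.g S.x₀ S.y₀ + gi 0) * S.gy)
        - S.b * ((S.g S.x₀ S.y₀ + gi 0) * deriv (fun y => hi y S.z₀ 0) S.y₀
            + hi S.y₀ S.z₀ 0 * deriv (fun z => hi S.y₀ z 0) S.z₀) :=
    (fd_t ((hwsm.differentiable inf_ne_zero_wt) _)).unique hutt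
  have huttval : (S.a + S.b) * ((S.g S.x₀ S.y₀ + gi 0) * S.gy)
      - S.b * ((S.g S.x₀ S.y₀ + gi 0) * deriv (fun y => hi y S.z₀ 0) S.y₀
          + hi S.y₀ S.z₀ 0 * deriv (fun z => hi S.y₀ z 0) S.z₀) = Dg * h0 := by
    have hG0 : S.g S.x₀ S.y₀ + gi 0 = S.b * hi S.y₀ S.z₀ 0 / (S.a + S.b) := by
      field_simp
      linarith [hfold]
    rw [hDg, hh0, hG0]
    field_simp
    ring
  have hDvt : Dv ((1:ℝ), (0:Q3)) = Dg * h0 / 2 := by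
    rw [hDvdef]
    have hint : IntervalIntegrable
        (fun σ => (fderiv ℝ (fun w : ℝ × ℝ × Q3 => wt S Y Z w.2)
          (σ, 0, ((S.x₀, S.z₀, 0) : Q3))).comp (LL σ)) MeasureTheory.volume 0 1 := by
      apply Continuous.intervalIntegrable
      exact (((hwsm.comp contDiff_snd).continuous_fderiv inf_ne_zero_wt).comp
        (by fun_prop)).clm_comp continuous_LL
    rw [ContinuousLinearMap.intervalIntegral_apply hint ((1:ℝ), (0:Q3))]
    have hptw : ∀ σ : ℝ, ((fderiv ℝ (fun w : ℝ × ℝ × Q3 => wt S Y Z w.2)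
        (σ, 0, ((S.x₀, S.z₀, 0) : Q3))).comp (LL σ)) ((1:ℝ), (0:Q3))
        = σ * (Dg * h0) := by
      intro σ
      rw [ContinuousLinearMap.comp_apply, hG3fd σ, ContinuousLinearMap.comp_apply]
      have hv : (ContinuousLinearMap.snd ℝ ℝ (ℝ × Q3)) (LL σ ((1:ℝ), (0:Q3)))
          = σ • (((1:ℝ), (0:Q3)) : ℝ × Q3) := by
        rw [LL_apply]
        simp [Prod.ext_iff]
      rw [hv, ContinuousLinearMap.map_smul, hfdwt_t, huttval, smul_eq_mul]
    rw [intervalIntegral.integral_congr (fun σ _ => hptw σ)]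
    rw [intervalIntegral.integral_mul_const, integral_id]
    ring
  have hvtne : Dg * h0 / 2 ≠ 0 := div_ne_zero (mul_ne_zero hDne hh0ne) two_ne_zero
  -- directional derivatives in the parameter directions
  have hDvx : Dv ((0:ℝ), ((1:ℝ), (0:ℝ), (0:ℝ))) = (S.a + S.b) * S.gx := by
    have hc : HasDerivAt (fun x : ℝ => (((0:ℝ), ((x, S.z₀, 0) : Q3)) : ℝ × Q3))
        (((0:ℝ), ((1:ℝ), (0:ℝ), (0:ℝ)))) S.x₀ :=
      (hasDerivAt_const _ _).prodMk ((hasDerivAt_id _).prodMk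
        ((hasDerivAt_const _ _).prodMk (hasDerivAt_const _ _)))
    have h1 : HasDerivAt (fun x => vF S Y Z ((0:ℝ), ((x, S.z₀, 0) : Q3)))
        (Dv ((0:ℝ), ((1:ℝ), (0:ℝ), (0:ℝ)))) S.x₀ := (hDv2.comp_hasDerivAt S.x₀ hc :)
    have h2 : (fun x => vF S Y Z ((0:ℝ), ((x, S.z₀, 0) : Q3)))
        = fun x => (S.a + S.b) * (S.g x S.y₀ + gi 0) - S.b * hi S.y₀ S.z₀ 0 := by
      funext x
      rw [v0eq (x, S.z₀, 0)]
      simp only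
      rw [hζz₀]
    rw [h2] at h1
    have h3 : HasDerivAt (fun x => (S.a + S.b) * (S.g x S.y₀ + gi 0) - S.b * hi S.y₀ S.z₀ 0)
        ((S.a + S.b) * S.gx) S.x₀ := by
      have h := ((hgx.add_const (gi 0)).const_mul (S.a + S.b)).sub_const (S.b * hi S.y₀ S.z₀ 0)
      exact h
    exact h1.unique h3
  have hDvz : Dv ((0:ℝ), ((0:ℝ), (1:ℝ), (0:ℝ))) = Dg := by
    have hc : HasDerivAt (fun z : ℝ => (((0:ℝ), ((S.x₀, z, 0) : Q3)) : ℝ × Q3))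
        (((0:ℝ), ((0:ℝ), (1:ℝ), (0:ℝ)))) S.z₀ :=
      (hasDerivAt_const _ _).prodMk ((hasDerivAt_const _ _).prodMk
        ((hasDerivAt_id _).prodMk (hasDerivAt_const _ _)))
    have h1 : HasDerivAt (fun z => vF S Y Z ((0:ℝ), ((S.x₀, z, 0) : Q3)))
        (Dv ((0:ℝ), ((0:ℝ), (1:ℝ), (0:ℝ)))) S.z₀ := (hDv2.comp_hasDerivAt S.z₀ hc :)
    have h2 : (fun z => vF S Y Z ((0:ℝ), ((S.x₀, z, 0) : Q3)))
        = fun z => (S.a + S.b) * (S.g S.x₀ (S.zeta z) + gi 0) - S.b * hi (S.zeta z) z 0 := by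
      funext z
      rw [v0eq (S.x₀, z, 0)]
    rw [h2] at h1
    -- derivative of the explicit slice
    have hgz : HasDerivAt (fun z => S.g S.x₀ (S.zeta z)) (S.gy * (S.b / (S.a + S.b))) S.z₀ := by
      have hgy' : HasDerivAt (fun y => S.g S.x₀ y) S.gy (S.zeta S.z₀) := by
        rw [hζz₀]; exact hgy
      exact HasDerivAt.comp S.z₀ hgy' (hζd S.z₀)
    have hhiz : HasDerivAt (fun z => hi (S.zeta z) z 0)
        ((S.b / (S.a + S.b)) * deriv (fun y => hi y S.z₀ 0) S.y₀
          + deriv (fun z => hi S.y₀ z 0) S.z₀) S.z₀ := by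
      have hc2 : HasDerivAt (fun z : ℝ => ((S.zeta z, z, (0:ℝ)) : Q3))
          ((S.b / (S.a + S.b), (1:ℝ), (0:ℝ))) S.z₀ :=
        (hζd S.z₀).prodMk ((hasDerivAt_id _).prodMk (hasDerivAt_const _ _))
      have hF : HasFDerivAt (fun p : Q3 => hi p.1 p.2.1 p.2.2)
          (fderiv ℝ (fun p : Q3 => hi p.1 p.2.1 p.2.2) (S.y₀, S.z₀, 0))
          ((S.zeta S.z₀, S.z₀, (0:ℝ)) : Q3) := by
        rw [hζz₀]; exact (hhid _).hasFDerivAt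
      have h := hF.comp_hasDerivAt S.z₀ hc2
      have hval : fderiv ℝ (fun p : Q3 => hi p.1 p.2.1 p.2.2) (S.y₀, S.z₀, 0)
          ((S.b / (S.a + S.b), (1:ℝ), (0:ℝ)))
          = (S.b / (S.a + S.b)) * deriv (fun y => hi y S.z₀ 0) S.y₀
            + deriv (fun z => hi S.y₀ z 0) S.z₀ := by
        have hv : ((S.b / (S.a + S.b), (1:ℝ), (0:ℝ)) : Q3)
            = (S.b / (S.a + S.b)) • ((1:ℝ), (0:ℝ), (0:ℝ)) + ((0:ℝ), (1:ℝ), (0:ℝ)) := by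
          simp [Prod.ext_iff]
        rw [hv, ContinuousLinearMap.map_add, ContinuousLinearMap.map_smul, hfdhi1, hfdhi2, smul_eq_mul]
      rwa [hval] at h
    have h3 : HasDerivAt
        (fun z => (S.a + S.b) * (S.g S.x₀ (S.zeta z) + gi 0) - S.b * hi (S.zeta z) z 0)
        ((S.a + S.b) * (S.gy * (S.b / (S.a + S.b)))
          - S.b * ((S.b / (S.a + S.b)) * deriv (fun y => hi y S.z₀ 0) S.y₀
              + deriv (fun z => hi S.y₀ z 0) S.z₀)) S.z₀ :=
      ((hgz.add_const (gi 0)).const_mul (S.a + S.b)).sub (hhiz.const_mul S.b)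
    have h4 := h1.unique h3
    rw [h4, hDg]
    field_simp
    ring
  have hDve : Dv ((0:ℝ), ((0:ℝ), (0:ℝ), (1:ℝ)))
      = (S.a + S.b) * deriv gi 0 - S.b * deriv (fun e => hi S.y₀ S.z₀ e) 0 := by
    have hc : HasDerivAt (fun e : ℝ => (((0:ℝ), ((S.x₀, S.z₀, e) : Q3)) : ℝ × Q3))
        (((0:ℝ), ((0:ℝ), (0:ℝ), (1:ℝ)))) 0 :=
      (hasDerivAt_const _ _).prodMk ((hasDerivAt_const _ _).prodMk
        ((hasDerivAt_const _ _).prodMk (hasDerivAt_id _)))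
    have h1 : HasDerivAt (fun e => vF S Y Z ((0:ℝ), ((S.x₀, S.z₀, e) : Q3)))
        (Dv ((0:ℝ), ((0:ℝ), (0:ℝ), (1:ℝ)))) 0 := (hDv2.comp_hasDerivAt 0 hc :)
    have h2 : (fun e => vF S Y Z ((0:ℝ), ((S.x₀, S.z₀, e) : Q3)))
        = fun e => (S.a + S.b) * (S.g S.x₀ S.y₀ + gi e) - S.b * hi S.y₀ S.z₀ e := by
      funext e
      rw [v0eq (S.x₀, S.z₀, e)]
      simp only
      rw [hζz₀]
    rw [h2] at h1
    have hgid : HasDerivAt gi (deriv gi 0) 0 :=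
      ((hgi.differentiable inf_ne_zero_wt) 0).hasDerivAt
    have h3 : HasDerivAt
        (fun e => (S.a + S.b) * (S.g S.x₀ S.y₀ + gi e) - S.b * hi S.y₀ S.z₀ e)
        ((S.a + S.b) * deriv gi 0 - S.b * deriv (fun e => hi S.y₀ S.z₀ e) 0) 0 :=
      ((hgid.const_add (S.g S.x₀ S.y₀)).const_mul (S.a + S.b)).sub (hHe.const_mul S.b)
    exact h1.unique h3
  -- the inverse function theorem setup
  set Φf : ℝ × Q3 → ℝ × Q3 := (fun w : ℝ × Q3 => ((vF S Y Z w, w.2) : ℝ × Q3)) with hΦfdef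
  have hΦ : ContDiffAt ℝ 2 Φf
      ((0:ℝ), ((S.x₀, S.z₀, 0) : Q3)) := (hv2.prodMk contDiff_snd).contDiffAt
  have hDvlin : ∀ (s : ℝ) (w : Q3), Dv (s, w) = s * (Dg * h0 / 2) + Dv (0, w) := by
    intro s w
    have hsw : ((s, w) : ℝ × Q3) = s • (((1:ℝ), (0:Q3)) : ℝ × Q3) + ((0:ℝ), w) := by
      simp [Prod.ext_iff]
    rw [hsw, ContinuousLinearMap.map_add, ContinuousLinearMap.map_smul, hDvt, smul_eq_mul]
  set A : (ℝ × Q3) →L[ℝ] (ℝ × Q3) := Dv.prod (ContinuousLinearMap.snd ℝ ℝ Q3) with hAdef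
  set B : (ℝ × Q3) →L[ℝ] (ℝ × Q3) :=
    ((Dg * h0 / 2)⁻¹ • (ContinuousLinearMap.fst ℝ ℝ Q3
      - Dv.comp ((0 : (ℝ × Q3) →L[ℝ] ℝ).prod (ContinuousLinearMap.snd ℝ ℝ Q3)))).prod
      (ContinuousLinearMap.snd ℝ ℝ Q3) with hBdef
  have hBA : ∀ w : ℝ × Q3, B (A w) = w := by
    rintro ⟨s, w⟩
    rw [hAdef, hBdef]
    simp only [ContinuousLinearMap.prod_apply, ContinuousLinearMap.smul_apply,
      ContinuousLinearMap.coe_sub', Pi.sub_apply, ContinuousLinearMap.coe_fst',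
      ContinuousLinearMap.coe_snd', ContinuousLinearMap.comp_apply,
      ContinuousLinearMap.zero_apply, smul_eq_mul]
    refine Prod.ext ?_ rfl
    simp only
    rw [hDvlin s w]
    field_simp
    ring
  have hAB : ∀ w : ℝ × Q3, A (B w) = w := by
    rintro ⟨r, w⟩
    rw [hAdef, hBdef]
    simp only [ContinuousLinearMap.prod_apply, ContinuousLinearMap.smul_apply,
      ContinuousLinearMap.coe_sub', Pi.sub_apply, ContinuousLinearMap.coe_fst',
      ContinuousLinearMap.coe_snd', ContinuousLinearMap.comp_apply,
      ContinuousLinearMap.zero_apply, smul_eq_mul]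
    refine Prod.ext ?_ rfl
    simp only
    rw [hDvlin ((Dg * h0 / 2)⁻¹ * (r - Dv (0, w))) w]
    field_simp
    ring
  set eqv : (ℝ × Q3) ≃L[ℝ] (ℝ × Q3) := ContinuousLinearEquiv.equivOfInverse A B hBA hAB
    with heqvdef
  have hcoe : (eqv : (ℝ × Q3) →L[ℝ] (ℝ × Q3)) = A := rfl
  have hAc : HasFDerivAt Φf
      (eqv : (ℝ × Q3) →L[ℝ] (ℝ × Q3)) ((0:ℝ), ((S.x₀, S.z₀, 0) : Q3)) := by
    rw [hcoe, hAdef]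
    exact hDv2.prodMk hasFDerivAt_snd
  have hΦa : Φf ((0:ℝ), ((S.x₀, S.z₀, 0) : Q3))
      = (((0:ℝ), ((S.x₀, S.z₀, 0) : Q3)) : ℝ × Q3) := by
    have hz : vF S Y Z ((0:ℝ), ((S.x₀, S.z₀, 0) : Q3)) = 0 := by
      rw [v0eq (S.x₀, S.z₀, 0)]
      simp only
      rw [hζz₀]
      exact hfold
    rw [hΦfdef]
    simp [hz]
  set Ψ : ℝ × Q3 → ℝ × Q3 := hΦ.localInverse hAc two_ne_zero with hΨdef
  have hΨright : ∀ᶠ y in 𝓝 (((0:ℝ), ((S.x₀, S.z₀, 0) : Q3)) : ℝ × Q3),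
      Φf (Ψ y) = y := by
    have h := (hΦ.hasStrictFDerivAt' hAc two_ne_zero).eventually_right_inverse
    rw [hΦa] at h
    exact h
  have hΨbase : Ψ ((0:ℝ), ((S.x₀, S.z₀, 0) : Q3)) = ((0:ℝ), ((S.x₀, S.z₀, 0) : Q3)) := by
    conv_lhs => rw [← hΦa]
    exact hΦ.localInverse_apply_image hAc two_ne_zero
  have hΨsm : ContDiffAt ℝ 2 Ψ ((0:ℝ), ((S.x₀, S.z₀, 0) : Q3)) := by
    have h := hΦ.to_localInverse hAc two_ne_zero
    rw [hΦa] at h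
    exact h
  have hTq0 : (Ψ ((0:ℝ), ((S.x₀, S.z₀, 0) : Q3))).1 = 0 := by rw [hΨbase]
  have hten : Filter.Tendsto (fun q : Q3 => (((0:ℝ), q) : ℝ × Q3))
      (𝓝 ((S.x₀, S.z₀, 0) : Q3)) (𝓝 (((0:ℝ), ((S.x₀, S.z₀, 0) : Q3)) : ℝ × Q3)) :=
    Continuous.tendsto (by fun_prop) _
  have hroot : ∀ᶠ q in 𝓝 ((S.x₀, S.z₀, 0) : Q3),
      vF S Y Z ((Ψ ((0:ℝ), q)).1, q) = 0 := by
    filter_upwards [hten.eventually hΨright] with q hq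
    rw [hΦfdef] at hq
    have h2 : (Ψ ((0:ℝ), q)).2 = q := congrArg Prod.snd hq
    have h1 : vF S Y Z (Ψ ((0:ℝ), q)) = 0 := congrArg Prod.fst hq
    have h3 : (((Ψ ((0:ℝ), q)).1, q) : ℝ × Q3) = Ψ ((0:ℝ), q) :=
      (congrArg (fun r : Q3 => (((Ψ ((0:ℝ), q)).1, r) : ℝ × Q3)) h2.symm).trans rfl
    rw [h3]
    exact h1
  have hTsm : ContDiffAt ℝ 2 (fun q : Q3 => (Ψ ((0:ℝ), q)).1) ((S.x₀, S.z₀, 0) : Q3) := by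
    have hemb : ContDiffAt ℝ 2 (fun q : Q3 => (((0:ℝ), q) : ℝ × Q3)) ((S.x₀, S.z₀, 0) : Q3) :=
      (contDiff_const.prodMk contDiff_id).contDiffAt
    exact contDiff_fst.contDiffAt.comp _ (hΨsm.comp _ hemb)
  obtain ⟨V₁, hV₁mem, hV₁⟩ := hTsm.contDiffOn (le_refl _) (by simp)
  -- the sign neighborhood
  have hfvA : fderiv ℝ (vF S Y Z) ((0:ℝ), ((S.x₀, S.z₀, 0) : Q3)) = Dv := hDv2.fderiv
  have hvtc : Continuous (fun w : ℝ × Q3 => fderiv ℝ (vF S Y Z) w ((1:ℝ), (0:Q3))) := by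
    have h1 : Continuous (fderiv ℝ (vF S Y Z)) := hv2.continuous_fderiv two_ne_zero
    exact (ContinuousLinearMap.apply ℝ ℝ (((1:ℝ), (0:Q3)) : ℝ × Q3)).continuous.comp h1
  have hmemO : ((0:ℝ), ((S.x₀, S.z₀, 0) : Q3)) ∈
      (fun w : ℝ × Q3 => fderiv ℝ (vF S Y Z) w ((1:ℝ), (0:Q3))) ⁻¹'
        Metric.ball (Dg * h0 / 2) |Dg * h0 / 2| := by
    simp only [Set.mem_preimage, Metric.mem_ball, hfvA, hDvt]
    rw [dist_self]
    exact abs_pos.mpr hvtne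
  obtain ⟨δ₁, hδ₁pos, hball⟩ := Metric.isOpen_iff.mp
    (Metric.isOpen_ball.preimage hvtc) _ hmemO
  have hδpos : 0 < δ₁ / 2 := by linarith
  -- smallness of T
  have hTev : ∀ᶠ q in 𝓝 ((S.x₀, S.z₀, 0) : Q3), |(Ψ ((0:ℝ), q)).1| < δ₁ / 2 := by
    have hc := hTsm.continuousAt
    rw [ContinuousAt, hTq0] at hc
    have h := hc (Metric.ball_mem_nhds (0:ℝ) hδpos)
    rw [Filter.mem_map] at h
    filter_upwards [h] with q hq
    simpa [Real.dist_eq] using hq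
  -- uniqueness of roots in the time interval
  have huniq : ∀ q : Q3, q ∈ Metric.ball ((S.x₀, S.z₀, 0) : Q3) (δ₁ / 2) →
      ∀ t t' : ℝ, |t| < δ₁ / 2 → |t'| < δ₁ / 2 →
      vF S Y Z (t, q) = vF S Y Z (t', q) → t = t' := by
    intro q hq t t' ht ht' heq
    have hmem : ∀ s ∈ Set.Ioo (-(δ₁/2)) (δ₁/2),
        ((s, q) : ℝ × Q3) ∈ Metric.ball (((0:ℝ), ((S.x₀, S.z₀, 0) : Q3)) : ℝ × Q3) δ₁ := by
      intro s hs
      rw [Metric.mem_ball, Prod.dist_eq]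
      apply max_lt
      · rw [Real.dist_eq, sub_zero]
        have := abs_lt.mpr ⟨hs.1, hs.2⟩
        calc |s| < δ₁ / 2 := by rw [abs_lt]; exact ⟨hs.1, hs.2⟩
        _ < δ₁ := by linarith
      · calc dist q ((S.x₀, S.z₀, 0) : Q3) < δ₁ / 2 := hq
        _ < δ₁ := by linarith
    have hder : ∀ s ∈ Set.Ioo (-(δ₁/2)) (δ₁/2),
        HasDerivAt (fun r => vF S Y Z (r, q))
          (fderiv ℝ (vF S Y Z) (s, q) ((1:ℝ), (0:Q3))) s :=
      fun s _ => fd_t ((hv2.differentiable two_ne_zero) _)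
    have hcont : ContinuousOn (fun r => vF S Y Z (r, q)) (Set.Ioo (-(δ₁/2)) (δ₁/2)) :=
      (hv2.continuous.comp (by fun_prop)).continuousOn
    have hsgn : ∀ s ∈ Set.Ioo (-(δ₁/2)) (δ₁/2),
        |fderiv ℝ (vF S Y Z) (s, q) ((1:ℝ), (0:Q3)) - Dg * h0 / 2| < |Dg * h0 / 2| := by
      intro s hs
      have := hball (hmem s hs)
      simpa [Real.dist_eq] using this
    have hinj : Set.InjOn (fun r => vF S Y Z (r, q)) (Set.Ioo (-(δ₁/2)) (δ₁/2)) := by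
      rcases lt_or_gt_of_ne hvtne with hneg | hpos
      · have hanti : StrictAntiOn (fun r => vF S Y Z (r, q)) (Set.Ioo (-(δ₁/2)) (δ₁/2)) := by
          apply strictAntiOn_of_deriv_neg (convex_Ioo _ _) hcont
          intro s hs
          rw [interior_Ioo] at hs
          rw [(hder s hs).deriv]
          have h := abs_lt.mp (hsgn s hs)
          rw [abs_of_neg hneg] at h
          linarith [h.2]
        exact hanti.injOn
      · have hmono : StrictMonoOn (fun r => vF S Y Z (r, q)) (Set.Ioo (-(δ₁/2)) (δ₁/2)) := by
          apply strictMonoOn_of_deriv_pos (convex_Ioo _ _) hcont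
          intro s hs
          rw [interior_Ioo] at hs
          rw [(hder s hs).deriv]
          have h := abs_lt.mp (hsgn s hs)
          rw [abs_of_pos hpos] at h
          linarith [h.1]
        exact hmono.injOn
    have htm : t ∈ Set.Ioo (-(δ₁/2)) (δ₁/2) := by
      rw [Set.mem_Ioo]; exact abs_lt.mp ht
    have htm' : t' ∈ Set.Ioo (-(δ₁/2)) (δ₁/2) := by
      rw [Set.mem_Ioo]; exact abs_lt.mp ht'
    exact hinj htm htm' heq
  -- assemble the neighborhood
  set U : Set Q3 := {q : Q3 | vF S Y Z ((Ψ ((0:ℝ), q)).1, q) = 0}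
    ∩ {q : Q3 | |(Ψ ((0:ℝ), q)).1| < δ₁ / 2} ∩ V₁
    ∩ Metric.ball ((S.x₀, S.z₀, 0) : Q3) (δ₁ / 2) with hUdef
  have hUmem : U ∈ 𝓝 ((S.x₀, S.z₀, 0) : Q3) := by
    rw [hUdef]
    exact Filter.inter_mem (Filter.inter_mem (Filter.inter_mem
      (Filter.eventually_iff.mp hroot) (Filter.eventually_iff.mp hTev)) hV₁mem)
      (Metric.ball_mem_nhds _ hδpos)
  -- the master per-point statement
  have hmaster : ∀ p : Q3, p ∈ U →
      uFun S Y Z ((Ψ ((0:ℝ), p)).1) p.1 p.2.1 p.2.2 = 0 ∧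
      vFun S Y Z ((Ψ ((0:ℝ), p)).1) p.1 p.2.1 p.2.2 = 0 ∧
      |(Ψ ((0:ℝ), p)).1| < δ₁ / 2 ∧
      (∀ t : ℝ, |t| < δ₁ / 2 → vFun S Y Z t p.1 p.2.1 p.2.2 = 0 → t = (Ψ ((0:ℝ), p)).1) := by
    rintro ⟨x, z, e⟩ hp
    rw [hUdef] at hp
    obtain ⟨⟨⟨hp1, hp2⟩, hp3⟩, hp4⟩ := hp
    have hvz : vFun S Y Z ((Ψ ((0:ℝ), ((x, z, e) : Q3))).1) x z e = 0 := by
      rw [vF_eq S hSol]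
      exact hp1
    refine ⟨?_, hvz, hp2, ?_⟩
    · rw [u_eq_t_mul_v S hSol, hvz, mul_zero]
    · intro t ht hv0
      rw [vF_eq S hSol] at hv0
      exact huniq (x, z, e) hp4 t _ ht hp2 (by rw [hv0, hp1])
  -- derivative computations for T
  have hembd : ∀ z₀ e₀ : ℝ, DifferentiableAt ℝ
      (fun x : ℝ => (Ψ ((0:ℝ), ((x, z₀, e₀) : Q3))).1) S.x₀ → True := fun _ _ _ => trivial
  have hTdiff := hTsm.differentiableAt two_ne_zero
  -- x-direction
  have hTdx : DifferentiableAt ℝ (fun x : ℝ => (Ψ ((0:ℝ), ((x, S.z₀, 0) : Q3))).1) S.x₀ :=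
    hTdiff.comp (f := fun x : ℝ => ((x, S.z₀, (0:ℝ)) : Q3)) S.x₀
      (differentiableAt_id.prodMk ((differentiableAt_const _).prodMk (differentiableAt_const _)))
  have hTX : HasDerivAt (fun x : ℝ => (Ψ ((0:ℝ), ((x, S.z₀, 0) : Q3))).1)
      (deriv (fun x : ℝ => (Ψ ((0:ℝ), ((x, S.z₀, 0) : Q3))).1) S.x₀) S.x₀ := hTdx.hasDerivAt
  have hvD' : HasFDerivAt (vF S Y Z) Dv
      (((Ψ ((0:ℝ), ((S.x₀, S.z₀, 0) : Q3))).1, ((S.x₀, S.z₀, 0) : Q3)) : ℝ × Q3) := by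
    rw [hTq0]
    exact hDv2
  have hchx := hvD'.comp_hasDerivAt S.x₀
    (hTX.prodMk ((hasDerivAt_id S.x₀).prodMk ((hasDerivAt_const S.x₀ S.z₀).prodMk (hasDerivAt_const S.x₀ (0:ℝ)))))
  have hevx : (fun x : ℝ => vF S Y Z ((Ψ ((0:ℝ), ((x, S.z₀, 0) : Q3))).1, ((x, S.z₀, 0) : Q3)))
      =ᶠ[𝓝 S.x₀] fun _ => (0:ℝ) := by
    have hte : Filter.Tendsto (fun x : ℝ => ((x, S.z₀, (0:ℝ)) : Q3)) (𝓝 S.x₀)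
        (𝓝 ((S.x₀, S.z₀, 0) : Q3)) := Continuous.tendsto (by fun_prop) _
    filter_upwards [hte.eventually hroot] with x hx using hx
  have h0dx : Dv ((deriv (fun x : ℝ => (Ψ ((0:ℝ), ((x, S.z₀, 0) : Q3))).1) S.x₀,
      ((1:ℝ), (0:ℝ), (0:ℝ))) : ℝ × Q3) = 0 := by
    have h : deriv (fun x : ℝ =>
        vF S Y Z ((Ψ ((0:ℝ), ((x, S.z₀, 0) : Q3))).1, ((x, S.z₀, 0) : Q3))) S.x₀
        = Dv ((deriv (fun x : ℝ => (Ψ ((0:ℝ), ((x, S.z₀, 0) : Q3))).1) S.x₀,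
            ((1:ℝ), (0:ℝ), (0:ℝ))) : ℝ × Q3) := hchx.deriv
    rw [hevx.deriv_eq] at h
    simp only [deriv_const'] at h
    exact h.symm
  have hdecx : ((deriv (fun x : ℝ => (Ψ ((0:ℝ), ((x, S.z₀, 0) : Q3))).1) S.x₀,
      ((1:ℝ), (0:ℝ), (0:ℝ))) : ℝ × Q3)
      = (deriv (fun x : ℝ => (Ψ ((0:ℝ), ((x, S.z₀, 0) : Q3))).1) S.x₀) •
          (((1:ℝ), (0:Q3)) : ℝ × Q3) + ((0:ℝ), ((1:ℝ), (0:ℝ), (0:ℝ))) := by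
    simp [Prod.ext_iff]
  rw [hdecx, ContinuousLinearMap.map_add, ContinuousLinearMap.map_smul, hDvt, hDvx, smul_eq_mul] at h0dx
  -- z-direction
  have hTdz : DifferentiableAt ℝ (fun z : ℝ => (Ψ ((0:ℝ), ((S.x₀, z, 0) : Q3))).1) S.z₀ :=
    hTdiff.comp (f := fun z : ℝ => ((S.x₀, z, (0:ℝ)) : Q3)) S.z₀
      ((differentiableAt_const _).prodMk (differentiableAt_id.prodMk (differentiableAt_const _)))
  have hTZ : HasDerivAt (fun z : ℝ => (Ψ ((0:ℝ), ((S.x₀, z, 0) : Q3))).1)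
      (deriv (fun z : ℝ => (Ψ ((0:ℝ), ((S.x₀, z, 0) : Q3))).1) S.z₀) S.z₀ := hTdz.hasDerivAt
  have hchz := hvD'.comp_hasDerivAt S.z₀
    (hTZ.prodMk ((hasDerivAt_const S.z₀ S.x₀).prodMk ((hasDerivAt_id S.z₀).prodMk (hasDerivAt_const S.z₀ (0:ℝ)))))
  have hevz : (fun z : ℝ => vF S Y Z ((Ψ ((0:ℝ), ((S.x₀, z, 0) : Q3))).1, ((S.x₀, z, 0) : Q3)))
      =ᶠ[𝓝 S.z₀] fun _ => (0:ℝ) := by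
    have hte : Filter.Tendsto (fun z : ℝ => ((S.x₀, z, (0:ℝ)) : Q3)) (𝓝 S.z₀)
        (𝓝 ((S.x₀, S.z₀, 0) : Q3)) := Continuous.tendsto (by fun_prop) _
    filter_upwards [hte.eventually hroot] with z hz using hz
  have h0dz : Dv ((deriv (fun z : ℝ => (Ψ ((0:ℝ), ((S.x₀, z, 0) : Q3))).1) S.z₀,
      ((0:ℝ), (1:ℝ), (0:ℝ))) : ℝ × Q3) = 0 := by
    have h : deriv (fun z : ℝ =>
        vF S Y Z ((Ψ ((0:ℝ), ((S.x₀, z, 0) : Q3))).1, ((S.x₀, z, 0) : Q3))) S.z₀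
        = Dv ((deriv (fun z : ℝ => (Ψ ((0:ℝ), ((S.x₀, z, 0) : Q3))).1) S.z₀,
            ((0:ℝ), (1:ℝ), (0:ℝ))) : ℝ × Q3) := hchz.deriv
    rw [hevz.deriv_eq] at h
    simp only [deriv_const'] at h
    exact h.symm
  have hdecz : ((deriv (fun z : ℝ => (Ψ ((0:ℝ), ((S.x₀, z, 0) : Q3))).1) S.z₀,
      ((0:ℝ), (1:ℝ), (0:ℝ))) : ℝ × Q3)
      = (deriv (fun z : ℝ => (Ψ ((0:ℝ), ((S.x₀, z, 0) : Q3))).1) S.z₀) •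
          (((1:ℝ), (0:Q3)) : ℝ × Q3) + ((0:ℝ), ((0:ℝ), (1:ℝ), (0:ℝ))) := by
    simp [Prod.ext_iff]
  rw [hdecz, ContinuousLinearMap.map_add, ContinuousLinearMap.map_smul, hDvt, hDvz, smul_eq_mul] at h0dz
  -- ε-direction
  have hTde : DifferentiableAt ℝ (fun e : ℝ => (Ψ ((0:ℝ), ((S.x₀, S.z₀, e) : Q3))).1) 0 :=
    hTdiff.comp (f := fun e : ℝ => ((S.x₀, S.z₀, e) : Q3)) 0
      ((differentiableAt_const _).prodMk ((differentiableAt_const _).prodMk differentiableAt_id))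
  have hTE : HasDerivAt (fun e : ℝ => (Ψ ((0:ℝ), ((S.x₀, S.z₀, e) : Q3))).1)
      (deriv (fun e : ℝ => (Ψ ((0:ℝ), ((S.x₀, S.z₀, e) : Q3))).1) 0) 0 := hTde.hasDerivAt
  have hche := hvD'.comp_hasDerivAt 0
    (hTE.prodMk ((hasDerivAt_const (0:ℝ) S.x₀).prodMk ((hasDerivAt_const (0:ℝ) S.z₀).prodMk (hasDerivAt_id (0:ℝ)))))
  have heve : (fun e : ℝ =>
      vF S Y Z ((Ψ ((0:ℝ), ((S.x₀, S.z₀, e) : Q3))).1, ((S.x₀, S.z₀, e) : Q3)))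
      =ᶠ[𝓝 0] fun _ => (0:ℝ) := by
    have hte : Filter.Tendsto (fun e : ℝ => ((S.x₀, S.z₀, e) : Q3)) (𝓝 0)
        (𝓝 ((S.x₀, S.z₀, 0) : Q3)) := Continuous.tendsto (by fun_prop) _
    filter_upwards [hte.eventually hroot] with e he using he
  have h0de : Dv ((deriv (fun e : ℝ => (Ψ ((0:ℝ), ((S.x₀, S.z₀, e) : Q3))).1) 0,
      ((0:ℝ), (0:ℝ), (1:ℝ))) : ℝ × Q3) = 0 := by
    have h : deriv (fun e : ℝ =>
        vF S Y Z ((Ψ ((0:ℝ), ((S.x₀, S.z₀, e) : Q3))).1, ((S.x₀, S.z₀, e) : Q3))) 0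
        = Dv ((deriv (fun e : ℝ => (Ψ ((0:ℝ), ((S.x₀, S.z₀, e) : Q3))).1) 0,
            ((0:ℝ), (0:ℝ), (1:ℝ))) : ℝ × Q3) := hche.deriv
    rw [heve.deriv_eq] at h
    simp only [deriv_const'] at h
    exact h.symm
  have hdece : ((deriv (fun e : ℝ => (Ψ ((0:ℝ), ((S.x₀, S.z₀, e) : Q3))).1) 0,
      ((0:ℝ), (0:ℝ), (1:ℝ))) : ℝ × Q3)
      = (deriv (fun e : ℝ => (Ψ ((0:ℝ), ((S.x₀, S.z₀, e) : Q3))).1) 0) •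
          (((1:ℝ), (0:Q3)) : ℝ × Q3) + ((0:ℝ), ((0:ℝ), (0:ℝ), (1:ℝ))) := by
    simp [Prod.ext_iff]
  rw [hdece, ContinuousLinearMap.map_add, ContinuousLinearMap.map_smul, hDvt, hDve, smul_eq_mul] at h0de
  -- final assembly
  unfold ReturnTimeConcl
  refine ⟨δ₁ / 2, hδpos, U, hUmem, (fun x z e => (Ψ ((0:ℝ), ((x, z, e) : Q3))).1),
    ?_, hTq0, hmaster, ?_, ?_, ?_, ?_⟩
  · -- smoothness
    have hsub : U ⊆ V₁ := by
      rw [hUdef]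
      intro q hq
      exact hq.1.2
    exact (hV₁.mono hsub)
  · -- uniqueness of the return-time function
    intro T' hT' p hpU
    obtain ⟨h1, h2, h3, h4⟩ := hmaster p hpU
    obtain ⟨h5, h6⟩ := hT' p hpU
    exact h4 _ h5 h6
  · -- x-derivative
    show deriv (fun x : ℝ => (Ψ ((0:ℝ), ((x, S.z₀, 0) : Q3))).1) S.x₀
      = -2 * ((S.a + S.b) * S.gx) / Dg / h0
    field_simp
    linear_combination (2 : ℝ) * h0dx
  · -- z-derivative
    show deriv (fun z : ℝ => (Ψ ((0:ℝ), ((S.x₀, z, 0) : Q3))).1) S.z₀ = -2 / h0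
    have h' : deriv (fun z : ℝ => (Ψ ((0:ℝ), ((S.x₀, z, 0) : Q3))).1) S.z₀ * h0 * Dg
        = -2 * Dg := by linear_combination (2 : ℝ) * h0dz
    have h'' := mul_right_cancel₀ hDne h'
    field_simp
    linarith [h'']
  · -- ε-derivative
    show deriv (fun e : ℝ => (Ψ ((0:ℝ), ((S.x₀, S.z₀, e) : Q3))).1) 0
      = -2 * ((S.a + S.b) * deriv gi 0 - S.b * deriv (fun e => hi S.y₀ S.z₀ e) 0) / Dg / h0
    field_simp
    linear_combination (2 : ℝ) * h0de


end PIHelper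

/-- for each `i ∈ {−,+}`, if `hⁱ ≠ 0` and `Dⁱ ≠ 0` then there is a unique `C²`
nontrivial return-time function `Tⁱ_ε(x,z)` near `(x₀,z₀,0)` with `Tⁱ₀(x₀,z₀) = 0`, solving
`H(Yⁱ(T,x,ζ(z),z,ε), Zⁱ(T,x,ζ(z),z,ε)) = 0` as the nonzero root near `t = 0`, with
`∂ₓTⁱ = ᾱⁱ/hⁱ`, `∂_zTⁱ = −2/hⁱ`, `∂_εTⁱ = γ̄ⁱ/hⁱ` at `(x₀,z₀,0)`. -/
theorem stmt3 (S : SysData) (Xm Ym Zm Xp Yp Zp : ℝ → ℝ → ℝ → ℝ → ℝ → ℝ)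
    (hSolm : IsSol S S.gm S.hm Xm Ym Zm) (hSolp : IsSol S S.gp S.hp Xp Yp Zp)
    (hhm0 : S.hm0 ≠ 0) (hhp0 : S.hp0 ≠ 0) (hDm : S.Dm ≠ 0) (hDp : S.Dp ≠ 0) :
    ReturnTimeConcl S Ym Zm S.hm0 S.albm S.gbm ∧
    ReturnTimeConcl S Yp Zp S.hp0 S.albp S.gbp := by
  constructor
  · exact PIHelper.worker S S.gm S.hm Xm Ym Zm S.smooth_gm S.smooth_hm hSolm S.foldm
      S.hm0 S.Dm rfl rfl hhm0 hDm
  · exact PIHelper.worker S S.gp S.hp Xp Yp Zp S.smooth_gp S.smooth_hp hSolp S.foldp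
      S.hp0 S.Dp rfl rfl hhp0 hDp
end
end
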